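/- arXiv:2408.00708 — 7 statements merged into one kernel-verified Lean document; each statement's English description precedes it below -/
import Mathlib

section
/- Let X be a real normed linear space and let x, y ∈ X with x ≠ 0. Then ρ'₊(x, y) = 0 if and only if there exists f₀ ∈ J(x) with f₀(y) = 0, and for every f ∈ J(x) and every t ∈ (0, 1), f(−t x + (1 − t) y) ≠ 0. -/
open Filter Set

/-- The norm derivative `ρ'₊(x,y) = lim_{t→0⁺} ‖x‖(‖x+ty‖−‖x‖)/t`.
(This one-sided limit always exists by convexity of the norm, so `limUnder` picks it.) -/
noncomputable def rhoP {X : Type*} [NormedAddCommGroup X] [NormedSpace ℝ X] (x y : X) : ℝ :=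
  limUnder (nhdsWithin (0 : ℝ) (Set.Ioi 0))
    (fun t : ℝ => ‖x‖ * (‖x + t • y‖ - ‖x‖) / t)

/-- The norm derivative `ρ'₋(x,y) = lim_{t→0⁻} ‖x‖(‖x+ty‖−‖x‖)/t`. -/
noncomputable def rhoM {X : Type*} [NormedAddCommGroup X] [NormedSpace ℝ X] (x y : X) : ℝ :=
  limUnder (nhdsWithin (0 : ℝ) (Set.Iio 0))
    (fun t : ℝ => ‖x‖ * (‖x + t • y‖ - ‖x‖) / t)

/-- `ρ'(x,y) = (ρ'₊(x,y) + ρ'₋(x,y))/2`. -/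
noncomputable def rho {X : Type*} [NormedAddCommGroup X] [NormedSpace ℝ X] (x y : X) : ℝ :=
  (rhoP x y + rhoM x y) / 2

/-- The set of support functionals at `x`. -/
def suppJ {X : Type*} [NormedAddCommGroup X] [NormedSpace ℝ X] (x : X) :
    Set (X →L[ℝ] ℝ) :=
  {f | ‖f‖ = 1 ∧ f x = ‖x‖}

namespace RhoAux

variable {X : Type*} [NormedAddCommGroup X] [NormedSpace ℝ X]

/-- difference quotient -/
noncomputable def q (x z : X) (t : ℝ) : ℝ := (‖x + t • z‖ - ‖x‖) / t

lemma q_mono (x z : X) : MonotoneOn (q x z) (Ioi 0) := by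
  intro s hs t ht hst
  have hs' : (0:ℝ) < s := hs
  have ht' : (0:ℝ) < t := ht
  have key : t * ‖x + s • z‖ ≤ s * ‖x + t • z‖ + (t - s) * ‖x‖ := by
    have e : t • (x + s • z) = s • (x + t • z) + (t - s) • x := by
      simp [smul_add, smul_smul]; module
    calc t * ‖x + s • z‖ = ‖t • (x + s • z)‖ := by
          rw [norm_smul, Real.norm_of_nonneg ht'.le]
      _ = ‖s • (x + t • z) + (t - s) • x‖ := by rw [e]
      _ ≤ ‖s • (x + t • z)‖ + ‖(t - s) • x‖ := norm_add_le _ _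
      _ = s * ‖x + t • z‖ + (t - s) * ‖x‖ := by
          rw [norm_smul, norm_smul, Real.norm_of_nonneg hs'.le,
            Real.norm_of_nonneg (by linarith)]
  unfold q
  rw [div_le_div_iff₀ hs' ht']
  nlinarith

lemma q_bddBelow (x z : X) : ∀ t ∈ Ioi (0:ℝ), -‖z‖ ≤ q x z t := by
  intro t ht
  have ht' : (0:ℝ) < t := ht
  have h1 : ‖x‖ ≤ ‖x + t • z‖ + t * ‖z‖ := by
    calc ‖x‖ = ‖(x + t • z) - t • z‖ := by rw [add_sub_cancel_right]
      _ ≤ ‖x + t • z‖ + ‖t • z‖ := norm_sub_le _ _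
      _ = ‖x + t • z‖ + t * ‖z‖ := by rw [norm_smul, Real.norm_of_nonneg ht'.le]
  unfold q
  rw [le_div_iff₀ ht']
  nlinarith

noncomputable def psi (x z : X) : ℝ := sInf (q x z '' Ioi 0)

lemma tendsto_q (x z : X) : Tendsto (q x z) (nhdsWithin 0 (Ioi 0)) (nhds (psi x z)) :=
  (q_mono x z).tendsto_nhdsGT
    ⟨-‖z‖, by rintro _ ⟨t, ht, rfl⟩; exact q_bddBelow x z t ht⟩

lemma psi_le_q (x z : X) {t : ℝ} (ht : 0 < t) : psi x z ≤ q x z t :=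
  csInf_le ⟨-‖z‖, by rintro _ ⟨s, hs, rfl⟩; exact q_bddBelow x z s hs⟩
    (mem_image_of_mem _ ht)

lemma psi_le_norm (x z : X) : psi x z ≤ ‖z‖ := by
  refine (psi_le_q x z one_pos).trans ?_
  unfold q
  have := norm_add_le x ((1:ℝ) • z)
  rw [norm_smul] at this
  simp at this ⊢
  linarith

lemma psi_smul_self (x : X) (α : ℝ) : psi x (α • x) = α * ‖x‖ := by
  refine tendsto_nhds_unique (tendsto_q x (α • x)) ?_
  have hev : ∀ᶠ t in nhdsWithin (0:ℝ) (Ioi 0), q x (α • x) t = α * ‖x‖ := by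
    filter_upwards [Ioo_mem_nhdsGT (by positivity : (0:ℝ) < 1/(|α|+1))] with t ht
    have ht0 : 0 < t := ht.1
    have h1 : t * |α| < 1 := by
      have := ht.2
      have h2 : t * (|α| + 1) < 1 := by
        rw [lt_div_iff₀ (by positivity)] at this; linarith
      nlinarith
    have hpos : 0 < 1 + t * α := by
      nlinarith [neg_abs_le α, abs_nonneg α]
    have e : x + t • (α • x) = (1 + t * α) • x := by
      rw [smul_smul]; module
    unfold q
    rw [e, norm_smul, Real.norm_of_nonneg hpos.le]
    field_simp
    ring
  exact tendsto_const_nhds.congr' (hev.mono fun t h => h.symm)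


lemma tendsto_two_mul : Tendsto (fun t : ℝ => 2 * t) (nhdsWithin 0 (Ioi 0)) (nhdsWithin 0 (Ioi 0)) := by
  apply tendsto_nhdsWithin_of_tendsto_nhds_of_eventually_within
  · have : Tendsto (fun t : ℝ => 2 * t) (nhds 0) (nhds (2 * 0)) :=
      (continuous_const.mul continuous_id).tendsto 0
    simpa using this.mono_left nhdsWithin_le_nhds
  · filter_upwards [self_mem_nhdsWithin] with t (ht : (0:ℝ) < t)
    exact mul_pos two_pos ht

lemma psi_add (x z w : X) : psi x (z + w) ≤ psi x z + psi x w := by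
  have key : ∀ t ∈ Ioi (0:ℝ), q x (z + w) t ≤ q x z (2 * t) + q x w (2 * t) := by
    intro t ht
    have ht' : (0:ℝ) < t := ht
    have e : (2:ℝ) • (x + t • (z + w)) = (x + (2 * t) • z) + (x + (2 * t) • w) := by
      module
    have h1 : 2 * ‖x + t • (z + w)‖ ≤ ‖x + (2 * t) • z‖ + ‖x + (2 * t) • w‖ := by
      calc 2 * ‖x + t • (z + w)‖ = ‖(2:ℝ) • (x + t • (z + w))‖ := by
            rw [norm_smul]; norm_num
        _ = ‖(x + (2 * t) • z) + (x + (2 * t) • w)‖ := by rw [e]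
        _ ≤ _ := norm_add_le _ _
    unfold q
    rw [← add_div, div_le_div_iff₀ ht' (by linarith : (0:ℝ) < 2 * t)]
    nlinarith
  have h2 : Tendsto (fun t => q x z (2 * t) + q x w (2 * t)) (nhdsWithin 0 (Ioi 0))
      (nhds (psi x z + psi x w)) :=
    (((tendsto_q x z).comp tendsto_two_mul).add ((tendsto_q x w).comp tendsto_two_mul))
  refine le_of_tendsto_of_tendsto (tendsto_q x (z + w)) h2 ?_
  filter_upwards [self_mem_nhdsWithin] with t ht
  exact key t ht

lemma psi_smul (x z : X) {c : ℝ} (hc : 0 < c) : psi x (c • z) = c * psi x z := by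
  have e : q x (c • z) = fun t => c * q x z (c * t) := by
    funext t
    unfold q
    rcases eq_or_ne t 0 with rfl | ht
    · simp
    · have : x + t • c • z = x + (c * t) • z := by rw [smul_smul, mul_comm]
      rw [this]
      field_simp
  have hmul : Tendsto (fun t : ℝ => c * t) (nhdsWithin 0 (Ioi 0)) (nhdsWithin 0 (Ioi 0)) := by
    apply tendsto_nhdsWithin_of_tendsto_nhds_of_eventually_within
    · have : Tendsto (fun t : ℝ => c * t) (nhds 0) (nhds (c * 0)) :=
        (continuous_const.mul continuous_id).tendsto 0
      simpa using this.mono_left nhdsWithin_le_nhds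
    · filter_upwards [self_mem_nhdsWithin] with t (ht : (0:ℝ) < t)
      exact mul_pos hc ht
  have h2 : Tendsto (q x (c • z)) (nhdsWithin 0 (Ioi 0)) (nhds (c * psi x z)) := by
    rw [e]
    exact (((tendsto_q x z).comp hmul)).const_mul c
  exact tendsto_nhds_unique (tendsto_q x (c • z)) h2

lemma psi_zero (x : X) : psi x 0 = 0 := by
  have := psi_smul_self x 0
  simpa using this

lemma suppJ_le_psi (x : X) {f : X →L[ℝ] ℝ} (hf : f ∈ suppJ x) (z : X) : f z ≤ psi x z := by
  refine le_csInf (⟨q x z 1, mem_image_of_mem _ (by norm_num : (1:ℝ) ∈ Ioi (0:ℝ))⟩) ?_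
  rintro _ ⟨t, ht, rfl⟩
  have ht' : (0:ℝ) < t := ht
  have h1 : f x + t * f z ≤ ‖x + t • z‖ := by
    have h := f.le_opNorm (x + t • z)
    rw [hf.1, one_mul, Real.norm_eq_abs] at h
    have h' := (le_abs_self (f (x + t • z))).trans h
    simpa [map_add, map_smul, smul_eq_mul] using h'
  unfold q
  rw [le_div_iff₀ ht']
  have := hf.2
  nlinarith

lemma exists_suppJ_psi (x : X) (hx : x ≠ 0) (y : X) :
    ∃ f ∈ suppJ x, f y = psi x y := by
  rcases eq_or_ne y 0 with rfl | hy
  · obtain ⟨f, hf1, hf2⟩ := exists_dual_vector ℝ x (norm_ne_zero_iff.2 hx)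
    refine ⟨f, ⟨hf1, by simpa using hf2⟩, by simp [psi_zero]⟩
  · set p := LinearPMap.mkSpanSingleton (K := ℝ) (L := ℝ) (σ := RingHom.id ℝ) y (psi x y) hy with hp
    have hdom : ∀ u : p.domain, p u ≤ psi x u := by
      rintro ⟨u, hu⟩
      rw [LinearPMap.domain_mkSpanSingleton, Submodule.mem_span_singleton] at hu
      obtain ⟨c, rfl⟩ := hu
      have hmem' : c • y ∈ p.domain := by
        rw [LinearPMap.domain_mkSpanSingleton]
        exact Submodule.smul_mem _ c (Submodule.mem_span_singleton_self y)
      have happ : p ⟨c • y, hmem'⟩ = c * psi x y := by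
        exact LinearPMap.mkSpanSingleton'_apply y (psi x y) _ c hmem'
      rw [happ]
      show c * psi x y ≤ psi x (c • y)
      rcases lt_trichotomy c 0 with hc | hc | hc
      · have e : c • y = (-c) • (-y) := by module
        rw [e, psi_smul x (-y) (by linarith)]
        have h0 : 0 ≤ psi x y + psi x (-y) := by
          have := psi_add x y (-y)
          simpa [psi_zero] using this
        nlinarith
      · subst hc; simp [psi_zero]
      · rw [psi_smul x y hc]
    obtain ⟨g, hg1, hg2⟩ := exists_extension_of_le_sublinear p (psi x)
      (fun c hc z => psi_smul x z hc) (psi_add x) hdom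
    have hmem : y ∈ p.domain := by
      rw [LinearPMap.domain_mkSpanSingleton]
      exact Submodule.mem_span_singleton_self y
    have hgy : g y = psi x y := by
      have h2 : p ⟨y, hmem⟩ = psi x y :=
        LinearPMap.mkSpanSingleton'_apply_self _ _ _ _
      exact (hg1 ⟨y, hmem⟩).trans h2
    have hbound : ∀ z, ‖g z‖ ≤ 1 * ‖z‖ := by
      intro z
      rw [one_mul, Real.norm_eq_abs, abs_le]
      constructor
      · have := (hg2 (-z)).trans (psi_le_norm x (-z))
        simp only [map_neg, norm_neg] at this
        linarith
      · exact (hg2 z).trans (psi_le_norm x z)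
    set f : X →L[ℝ] ℝ := g.mkContinuous 1 hbound with hf
    have hfz : ∀ z, f z = g z := fun z => rfl
    have hpx : psi x x = ‖x‖ := by simpa using psi_smul_self x 1
    have hpnx : psi x (-x) = -‖x‖ := by
      have := psi_smul_self x (-1)
      simpa [neg_smul, one_smul] using this
    have hfx : f x = ‖x‖ := by
      have h1 : g x ≤ ‖x‖ := (hg2 x).trans hpx.le
      have h2 : g (-x) ≤ -‖x‖ := (hg2 (-x)).trans hpnx.le
      rw [map_neg] at h2
      have : f x = g x := rfl
      rw [this]; linarith
    have hfnorm : ‖f‖ = 1 := by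
      refine le_antisymm (g.mkContinuous_norm_le zero_le_one hbound) ?_
      have hxp : 0 < ‖x‖ := norm_pos_iff.2 hx
      have h := f.le_opNorm x
      rw [Real.norm_eq_abs, hfx, abs_of_nonneg hxp.le] at h
      nlinarith
    exact ⟨f, ⟨hfnorm, hfx⟩, hgy⟩

end RhoAux

open RhoAux

/-- Characterization of ρ₊-orthogonality. -/
theorem rhoP_orthogonality_iff {X : Type*} [NormedAddCommGroup X] [NormedSpace ℝ X]
    (x y : X) (hx : x ≠ 0) :
    rhoP x y = 0 ↔
      ((∃ f₀ ∈ suppJ x, f₀ y = 0) ∧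
        ∀ f ∈ suppJ x, ∀ t ∈ Set.Ioo (0 : ℝ) 1, f (-t • x + (1 - t) • y) ≠ 0) := by
  have hxp : 0 < ‖x‖ := norm_pos_iff.2 hx
  have hlim : Tendsto (fun t : ℝ => ‖x‖ * (‖x + t • y‖ - ‖x‖) / t)
      (nhdsWithin (0 : ℝ) (Set.Ioi 0)) (nhds (‖x‖ * psi x y)) := by
    have := (tendsto_q x y).const_mul ‖x‖
    refine this.congr fun t => ?_
    unfold q
    ring
  have hrho : rhoP x y = ‖x‖ * psi x y := hlim.limUnder_eq
  rw [hrho]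
  constructor
  · intro h
    have hpsi : psi x y = 0 := by
      rcases mul_eq_zero.1 h with h' | h'
      · exact absurd h' hxp.ne'
      · exact h'
    obtain ⟨f₀, hf₀, hf₀y⟩ := exists_suppJ_psi x hx y
    refine ⟨⟨f₀, hf₀, by rw [hf₀y, hpsi]⟩, ?_⟩
    intro f hf t ht
    have hfy : f y ≤ 0 := by
      have := suppJ_le_psi x hf y
      rw [hpsi] at this; exact this
    have hval : f (-t • x + (1 - t) • y) = -t * ‖x‖ + (1 - t) * f y := by
      simp [map_add, map_smul, smul_eq_mul, hf.2]
    rw [hval]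
    have : -t * ‖x‖ + (1 - t) * f y < 0 := by nlinarith [ht.1, ht.2]
    exact this.ne
  · rintro ⟨⟨f₀, hf₀, hf₀y⟩, hall⟩
    have h1 : 0 ≤ psi x y := by
      have := suppJ_le_psi x hf₀ y
      rw [hf₀y] at this; exact this
    have h2 : psi x y ≤ 0 := by
      by_contra hcon
      push_neg at hcon
      obtain ⟨f, hf, hfy⟩ := exists_suppJ_psi x hx y
      set s := psi x y
      set t := s / (s + ‖x‖) with htdef
      have hden : 0 < s + ‖x‖ := by linarith
      have ht : t ∈ Set.Ioo (0:ℝ) 1 := by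
        constructor
        · exact div_pos hcon hden
        · rw [div_lt_one hden]; linarith
      have : f (-t • x + (1 - t) • y) = 0 := by
        have hval : f (-t • x + (1 - t) • y) = -t * ‖x‖ + (1 - t) * s := by
          simp [map_add, map_smul, smul_eq_mul, hf.2, hfy]
        rw [hval, htdef]
        field_simp
        ring
      exact hall f hf t ht this
    have : psi x y = 0 := le_antisymm h2 h1
    rw [this, mul_zero]
end

section
/- Let X be a real normed linear space and let x ∈ X with x ≠ 0. Then x is ρ₊-smooth if and only if the set x^{⊥₊} = {y ∈ X : ρ'₊(x,y) = 0} is a linear subspace of X of codimension one (i.e., a maximal proper linear subspace of X). -/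
open Filter Set

open Topology

section aux
variable {X : Type*} [NormedAddCommGroup X] [NormedSpace ℝ X]

private lemma slope_mono (x y : X) :
    MonotoneOn (fun t : ℝ => ‖x‖ * (‖x + t • y‖ - ‖x‖) / t) (Set.Ioi 0) := by
  intro s hs t ht hst
  simp only [Set.mem_Ioi] at hs ht
  have key : t * ‖x + s • y‖ ≤ (t - s) * ‖x‖ + s * ‖x + t • y‖ := by
    have hid : t • (x + s • y) = (t - s) • x + s • (x + t • y) := by module
    calc t * ‖x + s • y‖ = ‖t • (x + s • y)‖ := by
          rw [norm_smul, Real.norm_of_nonneg ht.le]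
      _ = ‖(t - s) • x + s • (x + t • y)‖ := by rw [hid]
      _ ≤ ‖(t - s) • x‖ + ‖s • (x + t • y)‖ := norm_add_le _ _
      _ = (t - s) * ‖x‖ + s * ‖x + t • y‖ := by
          rw [norm_smul, norm_smul, Real.norm_of_nonneg hs.le,
            Real.norm_of_nonneg (by linarith : (0:ℝ) ≤ t - s)]
  simp only
  rw [div_le_div_iff₀ hs ht]
  nlinarith [mul_le_mul_of_nonneg_left key (norm_nonneg x)]

private lemma slope_bdd (x y : X) :
    BddBelow ((fun t : ℝ => ‖x‖ * (‖x + t • y‖ - ‖x‖) / t) '' Set.Ioi 0) := by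
  refine ⟨-(‖x‖ * ‖y‖), ?_⟩
  rintro _ ⟨t, ht, rfl⟩
  simp only [Set.mem_Ioi] at ht
  have h1 : ‖x‖ - t * ‖y‖ ≤ ‖x + t • y‖ := by
    have h := norm_sub_norm_le x (x + t • y)
    have h2 : x - (x + t • y) = -(t • y) := by abel
    rw [h2, norm_neg, norm_smul, Real.norm_of_nonneg ht.le] at h
    linarith
  simp only
  rw [le_div_iff₀ ht]
  nlinarith [norm_nonneg x]

lemma tendsto_rhoP (x y : X) :
    Tendsto (fun t : ℝ => ‖x‖ * (‖x + t • y‖ - ‖x‖) / t) (𝓝[>] (0:ℝ))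
      (𝓝 (rhoP x y)) := by
  have h := (slope_mono x y).tendsto_nhdsGT (slope_bdd x y)
  have : rhoP x y = sInf ((fun t : ℝ => ‖x‖ * (‖x + t • y‖ - ‖x‖) / t) '' Set.Ioi 0) :=
    h.limUnder_eq
  rw [this]; exact h

lemma rhoP_smul_x (x : X) (s : ℝ) : rhoP x (s • x) = s * (‖x‖ * ‖x‖) := by
  have hconst : Tendsto (fun _ : ℝ => s * (‖x‖ * ‖x‖)) (𝓝[>] (0:ℝ))
      (𝓝 (s * (‖x‖ * ‖x‖))) := tendsto_const_nhds
  have heq : ∀ᶠ t in 𝓝[>] (0:ℝ),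
      ‖x‖ * (‖x + t • s • x‖ - ‖x‖) / t = s * (‖x‖ * ‖x‖) := by
    filter_upwards [Ioo_mem_nhdsGT_of_mem (Set.left_mem_Ico.2
      (by positivity : (0:ℝ) < 1 / (|s| + 1)))] with t ht
    obtain ⟨ht0, ht1⟩ := ht
    have hpos : 0 < 1 + t * s := by
      have : |t * s| < 1 := by
        rw [abs_mul, abs_of_pos ht0]
        calc t * |s| ≤ t * (|s| + 1) := by nlinarith
          _ < 1 / (|s| + 1) * (|s| + 1) := by
              apply mul_lt_mul_of_pos_right ht1; positivity
          _ = 1 := by field_simp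
      cases abs_lt.1 this; linarith
    have : x + t • s • x = (1 + t * s) • x := by module
    rw [this, norm_smul, Real.norm_of_nonneg hpos.le]
    field_simp
    ring
  exact tendsto_nhds_unique (tendsto_rhoP x (s • x)) (Filter.Tendsto.congr' (heq.mono fun t h => h.symm) hconst)

lemma rhoP_zero (x : X) : rhoP x 0 = 0 := by
  have := rhoP_smul_x x 0
  simpa using this

lemma rhoP_self (x : X) : rhoP x x = ‖x‖ * ‖x‖ := by
  have := rhoP_smul_x x 1
  simpa using this

lemma tendsto_mul_Ioi (c : ℝ) (hc : 0 < c) :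
    Tendsto (fun t : ℝ => c * t) (𝓝[>] (0:ℝ)) (𝓝[>] (0:ℝ)) := by
  rw [tendsto_nhdsWithin_iff]
  constructor
  · have : Tendsto (fun t : ℝ => c * t) (𝓝 (0:ℝ)) (𝓝 (c * 0)) :=
      (continuous_const.mul continuous_id).tendsto 0
    simpa using this.mono_left nhdsWithin_le_nhds
  · filter_upwards [self_mem_nhdsWithin] with t ht
    exact mul_pos hc ht

lemma rhoP_smul_pos (x y : X) (c : ℝ) (hc : 0 < c) : rhoP x (c • y) = c * rhoP x y := by
  have h1 : Tendsto (fun t : ℝ => c * (‖x‖ * (‖x + (c * t) • y‖ - ‖x‖) / (c * t)))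
      (𝓝[>] (0:ℝ)) (𝓝 (c * rhoP x y)) :=
    (((tendsto_rhoP x y).comp (tendsto_mul_Ioi c hc)).const_mul c)
  have heq : ∀ᶠ t in 𝓝[>] (0:ℝ),
      c * (‖x‖ * (‖x + (c * t) • y‖ - ‖x‖) / (c * t)) =
        ‖x‖ * (‖x + t • c • y‖ - ‖x‖) / t := by
    filter_upwards [self_mem_nhdsWithin] with t ht
    have ht : (0:ℝ) < t := ht
    rw [smul_smul, mul_comm t c]
    field_simp
  exact tendsto_nhds_unique (tendsto_rhoP x (c • y)) (Filter.Tendsto.congr' heq h1)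

lemma rhoP_subadd (x y z : X) : rhoP x (y + z) ≤ rhoP x y + rhoP x z := by
  have h2 : Tendsto (fun t : ℝ => ‖x‖ * (‖x + (2 * t) • y‖ - ‖x‖) / (2 * t) +
      ‖x‖ * (‖x + (2 * t) • z‖ - ‖x‖) / (2 * t)) (𝓝[>] (0:ℝ))
      (𝓝 (rhoP x y + rhoP x z)) :=
    (((tendsto_rhoP x y).comp (tendsto_mul_Ioi 2 two_pos)).add
      ((tendsto_rhoP x z).comp (tendsto_mul_Ioi 2 two_pos)))
  refine le_of_tendsto_of_tendsto (tendsto_rhoP x (y + z)) h2 ?_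
  filter_upwards [self_mem_nhdsWithin] with t ht
  have ht : (0:ℝ) < t := ht
  have h2t : (0:ℝ) < 2 * t := by linarith
  have key : 2 * ‖x + t • (y + z)‖ ≤ ‖x + (2 * t) • y‖ + ‖x + (2 * t) • z‖ := by
    have hid : (2:ℝ) • (x + t • (y + z)) = (x + (2 * t) • y) + (x + (2 * t) • z) := by
      module
    calc 2 * ‖x + t • (y + z)‖ = ‖(2:ℝ) • (x + t • (y + z))‖ := by
          rw [norm_smul]; norm_num
      _ = ‖(x + (2 * t) • y) + (x + (2 * t) • z)‖ := by rw [hid]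
      _ ≤ _ := norm_add_le _ _
  rw [← add_div, div_le_div_iff₀ ht h2t]
  nlinarith [mul_le_mul_of_nonneg_left key (norm_nonneg x)]

end aux

lemma rhoP_add_smul_x {X : Type*} [NormedAddCommGroup X] [NormedSpace ℝ X] (x y : X) (s : ℝ) :
    rhoP x (y + s • x) = rhoP x y + s * (‖x‖ * ‖x‖) := by
  have h1 := rhoP_subadd x y (s • x)
  rw [rhoP_smul_x] at h1
  have h2 := rhoP_subadd x (y + s • x) ((-s) • x)
  rw [rhoP_smul_x] at h2
  have hyy : y + s • x + (-s) • x = y := by module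
  rw [hyy] at h2
  linarith

/-- x is ρ₊-smooth iff its ρ₊-orthogonality set is a linear subspace of codimension one
(i.e. a maximal proper linear subspace, a coatom in the lattice of submodules). -/
theorem rhoP_smooth_iff_orthogonal_set_maximal_subspace
    {X : Type*} [NormedAddCommGroup X] [NormedSpace ℝ X] (x : X) (hx : x ≠ 0) :
    (∀ y₁ y₂ : X, rhoP x (y₁ + y₂) = rhoP x y₁ + rhoP x y₂) ↔
      ∃ M : Submodule ℝ X, (M : Set X) = {y : X | rhoP x y = 0} ∧ IsCoatom M := by
  have hxx : rhoP x x ≠ 0 := by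
    rw [rhoP_self]
    exact mul_ne_zero (norm_ne_zero_iff.2 hx) (norm_ne_zero_iff.2 hx)
  constructor
  · intro hadd
    have hneg : ∀ y : X, rhoP x (-y) = -rhoP x y := by
      intro y
      have h := hadd y (-y)
      simp only [add_neg_cancel, rhoP_zero] at h
      linarith
    have hsmul : ∀ (c : ℝ) (y : X), rhoP x (c • y) = c * rhoP x y := by
      intro c y
      rcases lt_trichotomy c 0 with hc | hc | hc
      · have : c • y = -((-c) • y) := by module
        rw [this, hneg, rhoP_smul_pos x y (-c) (by linarith)]
        ring
      · subst hc; simp [rhoP_zero]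
      · exact rhoP_smul_pos x y c hc
    refine ⟨{ carrier := {y | rhoP x y = 0}
              add_mem' := by
                intro a b ha hb
                simp only [Set.mem_setOf_eq] at *
                rw [hadd, ha, hb, add_zero]
              zero_mem' := rhoP_zero x
              smul_mem' := by
                intro c y hy
                simp only [Set.mem_setOf_eq] at *
                rw [hsmul, hy, mul_zero] }, rfl, ?_, ?_⟩
    · intro htop
      have hmem : x ∈ (⊤ : Submodule ℝ X) := Submodule.mem_top
      rw [← htop] at hmem
      exact hxx hmem
    · intro N hN
      obtain ⟨z, hzN, hzM⟩ := SetLike.exists_of_lt hN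
      have hz : rhoP x z ≠ 0 := hzM
      rw [Submodule.eq_top_iff']
      intro y
      set c := rhoP x y / rhoP x z with hc
      have hmem : y - c • z ∈ N := by
        apply hN.le
        show rhoP x (y - c • z) = 0
        have : y - c • z = y + -(c • z) := by module
        rw [this, hadd, hneg, hsmul, hc, div_mul_cancel₀ _ hz]
        ring
      have : y = (y - c • z) + c • z := by module
      rw [this]
      exact N.add_mem hmem (N.smul_mem c hzN)
  · rintro ⟨M, hM, hco⟩ y₁ y₂
    have hMzero : ∀ m : X, m ∈ M → rhoP x m = 0 := by
      intro m hm
      have : m ∈ ({y | rhoP x y = 0} : Set X) := hM ▸ hm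
      exact this
    have hxM : x ∉ M := by
      intro h
      exact hxx (hMzero x h)
    have hlt : M < M ⊔ Submodule.span ℝ {x} := by
      refine lt_of_le_of_ne le_sup_left ?_
      intro h
      exact hxM (h ▸ Submodule.mem_sup_right (Submodule.mem_span_singleton_self x))
    have htop := hco.2 _ hlt
    have hdecomp : ∀ y : X, ∃ (m : X) (s : ℝ), m ∈ M ∧ y = m + s • x := by
      intro y
      have hy : y ∈ M ⊔ Submodule.span ℝ {x} := htop ▸ Submodule.mem_top
      obtain ⟨m, hm, z, hz, hsum⟩ := Submodule.mem_sup.1 hy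
      obtain ⟨s, rfl⟩ := Submodule.mem_span_singleton.1 hz
      exact ⟨m, s, hm, hsum.symm⟩
    obtain ⟨m₁, s₁, hm₁, rfl⟩ := hdecomp y₁
    obtain ⟨m₂, s₂, hm₂, rfl⟩ := hdecomp y₂
    have hsum : m₁ + s₁ • x + (m₂ + s₂ • x) = (m₁ + m₂) + (s₁ + s₂) • x := by module
    rw [hsum, rhoP_add_smul_x, rhoP_add_smul_x, rhoP_add_smul_x,
      hMzero _ hm₁, hMzero _ hm₂, hMzero _ (M.add_mem hm₁ hm₂)]
    ring
end

section
/- Let X be a real normed linear space and let x ∈ X with x ≠ 0. Then x is ρ₋-smooth if and only if the set x^{⊥₋} = {y ∈ X : ρ'₋(x,y) = 0} is a linear subspace of X of codimension one (i.e., a maximal proper linear subspace of X). -/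
open Filter Set

section Aux
variable {X : Type*} [NormedAddCommGroup X] [NormedSpace ℝ X]

lemma normLine_convexOn (x y : X) :
    ConvexOn ℝ Set.univ (fun t : ℝ => ‖x + t • y‖) := by
  have h := (convexOn_univ_norm (E := X)).comp_affineMap (AffineMap.lineMap x (x + y))
  have he : (fun t : ℝ => ‖x + t • y‖) = (norm ∘ (AffineMap.lineMap x (x + y))) := by
    funext t
    simp [AffineMap.lineMap_apply, add_sub_cancel_left, add_comm]
  rw [he]
  simpa using h

lemma quot_eq_slope (x y : X) {t : ℝ} (ht : t ≠ 0) :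
    ‖x‖ * (‖x + t • y‖ - ‖x‖) / t = ‖x‖ * slope (fun s : ℝ => ‖x + s • y‖) 0 t := by
  rw [slope_def_field]
  simp only [zero_smul, add_zero]
  rw [sub_zero, mul_div_assoc]

lemma tendsto_rhoM (x y : X) :
    Tendsto (fun t : ℝ => ‖x‖ * (‖x + t • y‖ - ‖x‖) / t)
      (nhdsWithin (0:ℝ) (Set.Iio 0)) (nhds (rhoM x y)) := by
  set f : ℝ → ℝ := fun t => ‖x‖ * (‖x + t • y‖ - ‖x‖) / t with hf
  have hs : MonotoneOn (slope (fun s : ℝ => ‖x + s • y‖) 0) (Set.univ \ {0}) :=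
    (normLine_convexOn x y).slope_mono (Set.mem_univ 0)
  have hmono : MonotoneOn f (Set.Iio 0) := by
    intro a ha b hb hab
    rw [hf]
    simp only
    rw [quot_eq_slope x y (ne_of_lt ha), quot_eq_slope x y (ne_of_lt hb)]
    exact mul_le_mul_of_nonneg_left
      (hs ⟨trivial, ne_of_lt ha⟩ ⟨trivial, ne_of_lt hb⟩ hab) (norm_nonneg x)
  have hbdd : BddAbove (f '' Set.Iio 0) := by
    refine ⟨‖x‖ * slope (fun s : ℝ => ‖x + s • y‖) 0 1, ?_⟩
    rintro _ ⟨t, ht, rfl⟩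
    rw [hf]
    simp only
    rw [quot_eq_slope x y (ne_of_lt ht)]
    exact mul_le_mul_of_nonneg_left
      (hs ⟨trivial, ne_of_lt ht⟩ ⟨trivial, one_ne_zero⟩ (le_of_lt (lt_trans ht one_pos)))
      (norm_nonneg x)
  have h := hmono.tendsto_nhdsLT hbdd
  have he : rhoM x y = sSup (f '' Set.Iio 0) := h.limUnder_eq
  rw [he]
  exact h

lemma rhoM_eq_of_tendsto {x y : X} {L : ℝ}
    (h : Tendsto (fun t : ℝ => ‖x‖ * (‖x + t • y‖ - ‖x‖) / t)
      (nhdsWithin (0:ℝ) (Set.Iio 0)) (nhds L)) : rhoM x y = L :=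
  h.limUnder_eq

lemma rhoM_zero (x : X) : rhoM x (0 : X) = 0 := by
  apply rhoM_eq_of_tendsto
  have : (fun t : ℝ => ‖x‖ * (‖x + t • (0:X)‖ - ‖x‖) / t) = fun _ => (0:ℝ) := by
    funext t; simp
  rw [this]
  exact tendsto_const_nhds

lemma tendsto_sub_zero : Tendsto (fun t : ℝ => t) (nhdsWithin (0:ℝ) (Set.Iio 0)) (nhdsWithin (0:ℝ) (Set.Iio 0)) := tendsto_id

lemma rhoM_smul_add (x : X) (α : ℝ) (y : X) :
    rhoM x (α • x + y) = α * ‖x‖ ^ 2 + rhoM x y := by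
  -- the substitution s = t / (1 + t * α)
  have hcont : Tendsto (fun t : ℝ => t / (1 + t * α)) (nhds 0) (nhds 0) := by
    have h1 : Tendsto (fun t : ℝ => t / (1 + t * α)) (nhds 0) (nhds (0 / (1 + 0 * α))) := by
      have hc1 : Continuous (fun t : ℝ => 1 + t * α) := by continuity
      exact Tendsto.div tendsto_id (by simpa using hc1.tendsto 0) (by norm_num)
    simpa using h1
  have hev1 : ∀ᶠ t in nhdsWithin (0:ℝ) (Set.Iio 0), 0 < 1 + t * α := by
    apply eventually_nhdsWithin_of_eventually_nhds
    have hc1 : Continuous (fun t : ℝ => 1 + t * α) := by continuity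
    have h1 : Tendsto (fun t : ℝ => 1 + t * α) (nhds 0) (nhds 1) := by
      simpa using hc1.tendsto 0
    exact h1.eventually (eventually_gt_nhds one_pos)
  have hneg : ∀ᶠ t in nhdsWithin (0:ℝ) (Set.Iio 0), t < 0 :=
    eventually_mem_nhdsWithin
  have hsub : Tendsto (fun t : ℝ => t / (1 + t * α)) (nhdsWithin (0:ℝ) (Set.Iio 0))
      (nhdsWithin (0:ℝ) (Set.Iio 0)) := by
    rw [tendsto_nhdsWithin_iff]
    refine ⟨hcont.mono_left nhdsWithin_le_nhds, ?_⟩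
    filter_upwards [hev1, hneg] with t h1 h2
    exact div_neg_of_neg_of_pos h2 h1
  have hkey : ∀ᶠ t in nhdsWithin (0:ℝ) (Set.Iio 0),
      ((fun s : ℝ => ‖x‖ * (‖x + s • y‖ - ‖x‖) / s) ∘ (fun t : ℝ => t / (1 + t * α))) t
        + α * ‖x‖ ^ 2
      = ‖x‖ * (‖x + t • (α • x + y)‖ - ‖x‖) / t := by
    filter_upwards [hev1, hneg] with t h1 h2
    have ht : t ≠ 0 := ne_of_lt h2
    have h1' : (1 + t * α) ≠ 0 := ne_of_gt h1
    set s : ℝ := t / (1 + t * α) with hsdef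
    have hxs : x + t • (α • x + y) = (1 + t * α) • (x + s • y) := by
      have hts : (1 + t * α) * s = t := by rw [hsdef]; field_simp
      rw [show (1 + t * α) • (x + s • y) = (1 + t * α) • x + ((1 + t * α) * s) • y from by
        rw [smul_add, smul_smul], hts]
      module
    have hnorm : ‖x + t • (α • x + y)‖ = (1 + t * α) * ‖x + s • y‖ := by
      rw [hxs, norm_smul, Real.norm_eq_abs, abs_of_pos h1]
    simp only [Function.comp_apply, hnorm, ← hsdef]
    rw [hsdef]
    field_simp
    ring
  have h2 : Tendsto (fun t : ℝ =>
      ((fun s : ℝ => ‖x‖ * (‖x + s • y‖ - ‖x‖) / s) ∘ (fun t : ℝ => t / (1 + t * α))) t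
        + α * ‖x‖ ^ 2)
      (nhdsWithin (0:ℝ) (Set.Iio 0)) (nhds (rhoM x y + α * ‖x‖ ^ 2)) :=
    ((tendsto_rhoM x y).comp hsub).add_const _
  have := rhoM_eq_of_tendsto (h2.congr' hkey)
  rw [this]; ring

lemma rhoM_smul_pos (x : X) {c : ℝ} (hc : 0 < c) (y : X) :
    rhoM x (c • y) = c * rhoM x y := by
  have hsub : Tendsto (fun t : ℝ => t * c) (nhdsWithin (0:ℝ) (Set.Iio 0))
      (nhdsWithin (0:ℝ) (Set.Iio 0)) := by
    rw [tendsto_nhdsWithin_iff]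
    constructor
    · have : Tendsto (fun t : ℝ => t * c) (nhds 0) (nhds (0 * c)) :=
        (continuous_id.mul continuous_const).tendsto 0
      simpa using this.mono_left nhdsWithin_le_nhds
    · filter_upwards [eventually_mem_nhdsWithin] with t (ht : t < 0)
      exact mul_neg_of_neg_of_pos ht hc
  have hkey : ∀ᶠ t in nhdsWithin (0:ℝ) (Set.Iio 0),
      c * ((fun s : ℝ => ‖x‖ * (‖x + s • y‖ - ‖x‖) / s) ∘ (fun t : ℝ => t * c)) t
      = ‖x‖ * (‖x + t • (c • y)‖ - ‖x‖) / t := by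
    filter_upwards [eventually_mem_nhdsWithin] with t (ht : t < 0)
    have ht' : t ≠ 0 := ne_of_lt ht
    simp only [Function.comp_apply, smul_smul]
    field_simp
  have h2 : Tendsto (fun t : ℝ =>
      c * ((fun s : ℝ => ‖x‖ * (‖x + s • y‖ - ‖x‖) / s) ∘ (fun t : ℝ => t * c)) t)
      (nhdsWithin (0:ℝ) (Set.Iio 0)) (nhds (c * rhoM x y)) :=
    ((tendsto_rhoM x y).comp hsub).const_mul c
  exact rhoM_eq_of_tendsto (h2.congr' hkey)

lemma rhoM_self (x : X) : rhoM x x = ‖x‖ ^ 2 := by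
  have := rhoM_smul_add x 1 (0 : X)
  simpa [rhoM_zero] using this

theorem rhoM_smooth_iff_orthogonal_set_maximal_subspace'
    (x : X) (hx : x ≠ 0) :
    (∀ y₁ y₂ : X, rhoM x (y₁ + y₂) = rhoM x y₁ + rhoM x y₂) ↔
      ∃ M : Submodule ℝ X, (M : Set X) = {y : X | rhoM x y = 0} ∧ IsCoatom M := by
  have hxx : rhoM x x = ‖x‖ ^ 2 := rhoM_self x
  have hxx0 : rhoM x x ≠ 0 := by
    rw [hxx]
    exact pow_ne_zero 2 (norm_ne_zero_iff.mpr hx)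
  constructor
  · intro h
    have hneg : ∀ y : X, rhoM x (-y) = - rhoM x y := by
      intro y
      have := h y (-y)
      simp only [add_neg_cancel, rhoM_zero] at this
      linarith
    have hsmul : ∀ (c : ℝ) (y : X), rhoM x (c • y) = c * rhoM x y := by
      intro c y
      rcases lt_trichotomy c 0 with hc | hc | hc
      · have : rhoM x (c • y) = rhoM x (-((-c) • y)) := by rw [neg_smul, neg_neg]
        rw [this, hneg, rhoM_smul_pos x (by linarith : (0:ℝ) < -c)]
        ring
      · subst hc; simp [rhoM_zero]
      · exact rhoM_smul_pos x hc y
    let F : X →ₗ[ℝ] ℝ :=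
      { toFun := rhoM x
        map_add' := h
        map_smul' := hsmul }
    have hFsurj : Function.Surjective F := by
      intro r
      refine ⟨(r / rhoM x x) • x, ?_⟩
      show rhoM x ((r / rhoM x x) • x) = r
      rw [hsmul, div_mul_cancel₀ _ hxx0]
    refine ⟨LinearMap.ker F, ?_, LinearMap.isCoatom_ker_of_surjective hFsurj⟩
    ext y
    simp [LinearMap.mem_ker]
    rfl
  · rintro ⟨M, hM, hcoatom⟩ y₁ y₂
    have hzero : ∀ m ∈ M, rhoM x m = 0 := by
      intro m hm
      have : m ∈ (M : Set X) := hm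
      rw [hM] at this
      exact this
    have hxM : x ∉ M := fun hmem => hxx0 (hzero x hmem)
    have hspan : ¬ Submodule.span ℝ {x} ≤ M := fun hle =>
      hxM (hle (Submodule.mem_span_singleton_self x))
    have hlt : M < M ⊔ Submodule.span ℝ {x} := left_lt_sup.2 hspan
    have htop : M ⊔ Submodule.span ℝ {x} = ⊤ := hcoatom.2 _ hlt
    have hdecomp : ∀ y : X, ∃ (m : X) (c : ℝ), m ∈ M ∧ y = c • x + m := by
      intro y
      have hy : y ∈ M ⊔ Submodule.span ℝ {x} := htop ▸ Submodule.mem_top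
      obtain ⟨m, hm, z, hz, rfl⟩ := Submodule.mem_sup.mp hy
      obtain ⟨c, rfl⟩ := Submodule.mem_span_singleton.mp hz
      exact ⟨m, c, hm, by rw [add_comm]⟩
    obtain ⟨m₁, c₁, hm₁, rfl⟩ := hdecomp y₁
    obtain ⟨m₂, c₂, hm₂, rfl⟩ := hdecomp y₂
    have e1 : (c₁ • x + m₁) + (c₂ • x + m₂) = (c₁ + c₂) • x + (m₁ + m₂) := by module
    rw [e1, rhoM_smul_add, rhoM_smul_add, rhoM_smul_add,
      hzero _ (M.add_mem hm₁ hm₂), hzero _ hm₁, hzero _ hm₂]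
    ring

end Aux

/-- x is ρ₋-smooth iff its ρ₋-orthogonality set is a linear subspace of codimension one. -/
theorem rhoM_smooth_iff_orthogonal_set_maximal_subspace
    {X : Type*} [NormedAddCommGroup X] [NormedSpace ℝ X] (x : X) (hx : x ≠ 0) :
    (∀ y₁ y₂ : X, rhoM x (y₁ + y₂) = rhoM x y₁ + rhoM x y₂) ↔
      ∃ M : Submodule ℝ X, (M : Set X) = {y : X | rhoM x y = 0} ∧ IsCoatom M := by
  exact rhoM_smooth_iff_orthogonal_set_maximal_subspace' x hx
end

section
/- Let H be a real Hilbert space and let T be a nonzero compact bounded linear operator on H, regarded as an element of the normed space K(H) of compact operators with the operator norm. Then T is ρ₊-smooth in K(H) if and only if there exists a unit vector x₀ ∈ H such that M_T = {x₀, −x₀}. -/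
open Filter Set

set_option synthInstance.maxHeartbeats 1000000

/-- The normed space K(H) of compact operators on H, as a submodule of H →L[ℝ] H. -/
noncomputable abbrev KH (H : Type*) [NormedAddCommGroup H] [InnerProductSpace ℝ H] :
    Submodule ℝ (H →L[ℝ] H) :=
  compactOperator (RingHom.id ℝ) H H


open Metric
open scoped RealInnerProductSpace

set_option maxHeartbeats 1000000

section RhoAux
variable {X : Type*} [NormedAddCommGroup X] [NormedSpace ℝ X]

lemma rho_mono (x y : X) :
    MonotoneOn (fun t : ℝ => ‖x‖ * (‖x + t • y‖ - ‖x‖) / t) (Ioi 0) := by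
  intro s hs t ht hst
  have hs0 : (0:ℝ) < s := hs
  have ht0 : (0:ℝ) < t := ht
  have h1 : t • (x + s • y) = s • (x + t • y) + (t - s) • x := by
    simp only [smul_add, smul_smul, sub_smul]
    rw [mul_comm t s]
    abel
  have key : t * ‖x + s • y‖ ≤ s * ‖x + t • y‖ + (t - s) * ‖x‖ := by
    calc t * ‖x + s • y‖ = ‖t • (x + s • y)‖ := by
          rw [norm_smul, Real.norm_eq_abs, abs_of_pos ht0]
      _ = ‖s • (x + t • y) + (t - s) • x‖ := by rw [h1]
      _ ≤ ‖s • (x + t • y)‖ + ‖(t - s) • x‖ := norm_add_le _ _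
      _ = s * ‖x + t • y‖ + (t - s) * ‖x‖ := by
          rw [norm_smul, norm_smul, Real.norm_eq_abs, Real.norm_eq_abs,
            abs_of_pos hs0, abs_of_nonneg (by linarith)]
  have h2 : (‖x + s • y‖ - ‖x‖) / s ≤ (‖x + t • y‖ - ‖x‖) / t := by
    rw [div_le_div_iff₀ hs0 ht0]; nlinarith
  have hx0 : (0:ℝ) ≤ ‖x‖ := norm_nonneg x
  calc ‖x‖ * (‖x + s • y‖ - ‖x‖) / s = ‖x‖ * ((‖x + s • y‖ - ‖x‖) / s) := by ring
    _ ≤ ‖x‖ * ((‖x + t • y‖ - ‖x‖) / t) := mul_le_mul_of_nonneg_left h2 hx0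
    _ = ‖x‖ * (‖x + t • y‖ - ‖x‖) / t := by ring

lemma rho_bdd (x y : X) :
    BddBelow ((fun t : ℝ => ‖x‖ * (‖x + t • y‖ - ‖x‖) / t) '' Ioi 0) := by
  refine ⟨-(‖x‖ * ‖y‖), ?_⟩
  rintro _ ⟨t, ht, rfl⟩
  have ht0 : (0:ℝ) < t := ht
  have h1 : ‖x‖ - t * ‖y‖ ≤ ‖x + t • y‖ := by
    have := norm_add_le (x + t • y) (-(t • y))
    simp only [add_neg_cancel_right, norm_neg, norm_smul, Real.norm_eq_abs,
      abs_of_pos ht0] at this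
    linarith
  rw [le_div_iff₀ ht0]
  nlinarith [norm_nonneg x, norm_nonneg y]

lemma rhoP_tendsto (x y : X) :
    Tendsto (fun t : ℝ => ‖x‖ * (‖x + t • y‖ - ‖x‖) / t) (nhdsWithin (0:ℝ) (Ioi 0))
      (nhds (rhoP x y)) := by
  have h := (rho_mono x y).tendsto_nhdsGT (rho_bdd x y)
  have h2 : rhoP x y = sInf ((fun t : ℝ => ‖x‖ * (‖x + t • y‖ - ‖x‖) / t) '' Ioi 0) :=
    h.limUnder_eq
  rw [h2]; exact h

lemma rhoP_zero_right (x : X) : rhoP x (0 : X) = 0 := by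
  have : (fun t : ℝ => ‖x‖ * (‖x + t • (0:X)‖ - ‖x‖) / t) = fun _ => (0:ℝ) := by
    funext t; simp
  rw [rhoP, this]
  exact Filter.Tendsto.limUnder_eq tendsto_const_nhds

end RhoAux

section NormDeriv
variable {F : Type*} [NormedAddCommGroup F] [InnerProductSpace ℝ F]

lemma hasDerivAt_norm_add_smul (u v : F) (hu : u ≠ 0) :
    HasDerivAt (fun t : ℝ => ‖u + t • v‖) (⟪u, v⟫ / ‖u‖) 0 := by
  have hnorm : ∀ t : ℝ, ‖u + t • v‖ =
      Real.sqrt (‖u‖^2 + 2 * ⟪u, v⟫ * t + ‖v‖^2 * t^2) := by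
    intro t
    rw [← Real.sqrt_sq (norm_nonneg (u + t • v))]
    congr 1
    rw [norm_add_sq_real, real_inner_smul_right, norm_smul, Real.norm_eq_abs,
      mul_pow, sq_abs]
    ring
  have hp : HasDerivAt (fun t : ℝ => ‖u‖^2 + 2 * ⟪u, v⟫ * t + ‖v‖^2 * t^2)
      (2 * ⟪u, v⟫) 0 := by
    have h3 : HasDerivAt (fun t : ℝ => 2 * ⟪u, v⟫ * t) (2 * ⟪u, v⟫) 0 := by
      simpa using (hasDerivAt_id (0:ℝ)).const_mul (2 * ⟪u, v⟫)
    have h2 : HasDerivAt (fun t : ℝ => ‖v‖^2 * t^2) 0 0 := by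
      simpa using (hasDerivAt_pow 2 (0:ℝ)).const_mul (‖v‖^2)
    exact (((hasDerivAt_const (0:ℝ) (‖u‖^2)).add h3).add h2).congr_deriv (by ring)
  have hne : ‖u‖^2 + 2 * ⟪u, v⟫ * 0 + ‖v‖^2 * 0^2 ≠ 0 := by
    simp [pow_ne_zero, norm_ne_zero_iff.2 hu]
  have h := hp.sqrt hne
  have heq : (fun t : ℝ => Real.sqrt (‖u‖^2 + 2 * ⟪u, v⟫ * t + ‖v‖^2 * t^2))
      = fun t : ℝ => ‖u + t • v‖ := by funext t; rw [hnorm t]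
  rw [heq] at h
  convert h using 1
  rw [show ‖u‖^2 + 2 * ⟪u, v⟫ * 0 + ‖v‖^2 * 0^2 = ‖u‖^2 by ring,
    Real.sqrt_sq (norm_nonneg u)]
  exact (mul_div_mul_left _ _ two_ne_zero).symm

lemma tendsto_norm_slope (u v : F) (hu : u ≠ 0) :
    Tendsto (fun t : ℝ => (‖u + t • v‖ - ‖u‖) / t) (nhdsWithin (0:ℝ) (Ioi 0))
      (nhds (⟪u, v⟫ / ‖u‖)) := by
  have h := (hasDerivAt_norm_add_smul u v hu)
  rw [hasDerivAt_iff_tendsto_slope] at h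
  have h2 := h.mono_left (nhdsWithin_mono (0:ℝ) (fun t ht => ne_of_gt ht))
  have heq : ∀ t : ℝ, slope (fun t : ℝ => ‖u + t • v‖) 0 t = (‖u + t • v‖ - ‖u‖) / t := by
    intro t
    simp [slope_def_field, div_eq_inv_mul]
  refine h2.congr fun t => ?_
  rw [heq]

end NormDeriv

section AuxHilbert
variable {H : Type*} [NormedAddCommGroup H] [InnerProductSpace ℝ H] [CompleteSpace H]

/-- Master compactness lemma: a sequence of unit vectors almost attaining the norm of a
compact operator has a subsequence converging to a norm-attaining unit vector. -/
lemma compact_attain_subseq (T : H →L[ℝ] H) (hc : IsCompactOperator ⇑T) (hT0 : 0 < ‖T‖)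
    (x : ℕ → H) (hx1 : ∀ n, ‖x n‖ = 1)
    (hlim : Tendsto (fun n => ‖T (x n)‖) atTop (nhds ‖T‖)) :
    ∃ z : H, ‖z‖ = 1 ∧ ‖T z‖ = ‖T‖ ∧
      ∃ φ : ℕ → ℕ, StrictMono φ ∧ Tendsto (fun n => x (φ n)) atTop (nhds z) := by
  classical
  set c : ℝ := ‖T‖ ^ 2 with hcdef
  set S : H →L[ℝ] H := (ContinuousLinearMap.adjoint T).comp T with hSdef
  have hSapp : ∀ w : H, S w = ContinuousLinearMap.adjoint T (T w) := fun w => rfl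
  have hinner : ∀ n, ⟪S (x n), x n⟫ = ‖T (x n)‖ ^ 2 := by
    intro n
    rw [hSapp, ContinuousLinearMap.adjoint_inner_left, real_inner_self_eq_norm_sq]
  have hTxle : ∀ n, ‖T (x n)‖ ≤ ‖T‖ := by
    intro n
    calc ‖T (x n)‖ ≤ ‖T‖ * ‖x n‖ := T.le_opNorm _
      _ = ‖T‖ := by rw [hx1 n, mul_one]
  have hadjnorm : ‖ContinuousLinearMap.adjoint T‖ = ‖T‖ := by
    rw [ContinuousLinearMap.adjoint]; exact LinearIsometryEquiv.norm_map _ _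
  have hSnorm : ∀ n, ‖S (x n)‖ ≤ c := by
    intro n
    calc ‖S (x n)‖ ≤ ‖ContinuousLinearMap.adjoint T‖ * ‖T (x n)‖ :=
          (ContinuousLinearMap.adjoint T).le_opNorm _
      _ ≤ ‖T‖ * ‖T‖ := by
          apply mul_le_mul (le_of_eq hadjnorm) (hTxle n) (norm_nonneg _) (le_of_lt hT0)
      _ = c := (sq ‖T‖).symm
  -- a compact set containing all `S (x n)`
  obtain ⟨K, hK, hKsub⟩ :=
    IsCompactOperator.image_closedBall_subset_compact (f := (T : H →ₗ[ℝ] H)) hc 1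
  have hK2 : IsCompact ((ContinuousLinearMap.adjoint T) '' K) :=
    hK.image (ContinuousLinearMap.adjoint T).continuous
  have hmem : ∀ n, S (x n) ∈ (ContinuousLinearMap.adjoint T) '' K := by
    intro n
    exact ⟨T (x n), hKsub ⟨x n, by simp [mem_closedBall, hx1 n], rfl⟩, rfl⟩
  obtain ⟨y, _, φ, hφ, hconv⟩ := hK2.tendsto_subseq hmem
  -- `‖S (x n) - c • x n‖ → 0`
  have hc0 : (0:ℝ) < c := pow_pos hT0 2
  have hdiff : Tendsto (fun n => ‖S (x n) - c • x n‖) atTop (nhds 0) := by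
    have hsq : ∀ n, ‖S (x n) - c • x n‖ ^ 2 ≤ 2 * c ^ 2 - 2 * c * ‖T (x n)‖ ^ 2 := by
      intro n
      have h1 : ‖S (x n) - c • x n‖ ^ 2
          = ‖S (x n)‖ ^ 2 - 2 * c * ⟪S (x n), x n⟫ + c ^ 2 := by
        rw [norm_sub_sq_real, real_inner_smul_right, norm_smul, Real.norm_eq_abs,
          abs_of_pos hc0, hx1 n]
        ring
      rw [h1, hinner n]
      nlinarith [hSnorm n, norm_nonneg (S (x n))]
    have hb : Tendsto (fun n => 2 * c ^ 2 - 2 * c * ‖T (x n)‖ ^ 2) atTop (nhds 0) := by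
      have h2 : Tendsto (fun n => ‖T (x n)‖ ^ 2) atTop (nhds (‖T‖ ^ 2)) := hlim.pow 2
      have h3 := (tendsto_const_nhds (x := 2 * c ^ 2) (f := atTop (α := ℕ))).sub
        (h2.const_mul (2 * c))
      have : 2 * c ^ 2 - 2 * c * ‖T‖ ^ 2 = 0 := by rw [hcdef]; ring
      rwa [this] at h3
    have hsq0 : Tendsto (fun n => ‖S (x n) - c • x n‖ ^ 2) atTop (nhds 0) :=
      squeeze_zero (fun n => sq_nonneg _) hsq hb
    have h4 := (Real.continuous_sqrt.tendsto 0).comp hsq0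
    simpa [Function.comp_def, Real.sqrt_sq (norm_nonneg _)] using h4
  have hcne : c ≠ 0 := ne_of_gt hc0
  have hxconv : Tendsto (fun n => c • x (φ n)) atTop (nhds y) := by
    have hzero : Tendsto (fun n => S (x (φ n)) - c • x (φ n)) atTop (nhds 0) := by
      rw [tendsto_zero_iff_norm_tendsto_zero]
      exact (hdiff.comp hφ.tendsto_atTop)
    have h1 := hconv.sub hzero
    simpa using h1
  set z : H := c⁻¹ • y with hzdef
  have hxz : Tendsto (fun n => x (φ n)) atTop (nhds z) := by
    have h1 := hxconv.const_smul c⁻¹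
    simpa [smul_smul, inv_mul_cancel₀ hcne] using h1
  have hz1 : ‖z‖ = 1 := by
    have h1 : Tendsto (fun n => ‖x (φ n)‖) atTop (nhds ‖z‖) := hxz.norm
    have h2 : Tendsto (fun n => ‖x (φ n)‖) atTop (nhds 1) := by
      simpa [hx1] using tendsto_const_nhds (x := (1:ℝ)) (f := atTop (α := ℕ))
    exact tendsto_nhds_unique h1 h2
  have hTz : ‖T z‖ = ‖T‖ := by
    have h1 : Tendsto (fun n => ‖T (x (φ n))‖) atTop (nhds ‖T z‖) :=
      ((T.continuous.tendsto z).comp hxz).norm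
    exact tendsto_nhds_unique h1 (hlim.comp hφ.tendsto_atTop)
  exact ⟨z, hz1, hTz, φ, hφ, hxz⟩

/-- A nonzero compact operator attains its norm. -/
lemma compact_exists_norm_eq (T : H →L[ℝ] H) (hc : IsCompactOperator ⇑T) (hT : T ≠ 0) :
    ∃ z : H, ‖z‖ = 1 ∧ ‖T z‖ = ‖T‖ := by
  have hT0 : 0 < ‖T‖ := norm_pos_iff.mpr hT
  have happrox : ∀ n : ℕ, ∃ xx : H, ‖xx‖ = 1 ∧ ‖T‖ - 1 / ((n:ℝ) + 1) < ‖T xx‖ := by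
    intro n
    by_contra hcon
    push_neg at hcon
    have hpos : (0:ℝ) < 1 / ((n:ℝ) + 1) := by positivity
    obtain ⟨v, hv⟩ : ∃ v : H, T v ≠ 0 := by
      by_contra h0
      push_neg at h0
      exact hT (by ext w; simp [h0 w])
    have hv0 : v ≠ 0 := fun h => hv (by simp [h])
    have hvn : ‖v‖ ≠ 0 := norm_ne_zero_iff.mpr hv0
    rcases le_or_gt 0 (‖T‖ - 1 / ((n:ℝ) + 1)) with hnn | hneg
    · have hle : ‖T‖ ≤ ‖T‖ - 1 / ((n:ℝ) + 1) := by
        apply ContinuousLinearMap.opNorm_le_bound' T hnn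
        intro w hw
        have hw0 : (0:ℝ) < ‖w‖ := lt_of_le_of_ne (norm_nonneg w) (Ne.symm hw)
        have hunit : ‖(‖w‖⁻¹ • w)‖ = 1 := by
          rw [norm_smul, Real.norm_eq_abs, abs_of_pos (inv_pos.mpr hw0),
            inv_mul_cancel₀ (ne_of_gt hw0)]
        have := hcon _ hunit
        rw [map_smul, norm_smul, Real.norm_eq_abs, abs_of_pos (inv_pos.mpr hw0)] at this
        calc ‖T w‖ = ‖w‖ * (‖w‖⁻¹ * ‖T w‖) := by field_simp
          _ ≤ ‖w‖ * (‖T‖ - 1 / ((n:ℝ) + 1)) := by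
              exact mul_le_mul_of_nonneg_left this (le_of_lt hw0)
          _ = (‖T‖ - 1 / ((n:ℝ) + 1)) * ‖w‖ := mul_comm _ _
      linarith
    · have hunit : ‖(‖v‖⁻¹ • v)‖ = 1 := by
        rw [norm_smul, Real.norm_eq_abs, abs_of_pos (inv_pos.mpr (norm_pos_iff.mpr hv0)),
          inv_mul_cancel₀ hvn]
      have := hcon _ hunit
      have := norm_nonneg (T (‖v‖⁻¹ • v))
      linarith
  choose xs hxs1 hxs2 using happrox
  have hlower : Tendsto (fun n : ℕ => ‖T‖ - 1 / ((n:ℝ) + 1)) atTop (nhds ‖T‖) := by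
    have h1 := tendsto_one_div_add_atTop_nhds_zero_nat (𝕜 := ℝ)
    have h2 := (tendsto_const_nhds (x := ‖T‖) (f := atTop (α := ℕ))).sub h1
    simpa using h2
  have hlim : Tendsto (fun n => ‖T (xs n)‖) atTop (nhds ‖T‖) := by
    apply tendsto_of_tendsto_of_tendsto_of_le_of_le hlower tendsto_const_nhds
    · exact fun n => le_of_lt (hxs2 n)
    · intro n
      calc ‖T (xs n)‖ ≤ ‖T‖ * ‖xs n‖ := T.le_opNorm _
        _ = ‖T‖ := by rw [hxs1 n, mul_one]
  obtain ⟨z, hz1, hz2, _⟩ := compact_attain_subseq T hc hT0 xs hxs1 hlim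
  exact ⟨z, hz1, hz2⟩

lemma rankone_mem (w b : H) : ((innerSL ℝ w).smulRight b) ∈ KH H := by
  show IsCompactOperator _
  refine ⟨(fun r : ℝ => r • b) '' Icc (-‖w‖) ‖w‖,
    isCompact_Icc.image (continuous_id.smul continuous_const), ?_⟩
  refine Filter.mem_of_superset (Metric.ball_mem_nhds 0 one_pos) ?_
  intro v hv
  have hvlt : ‖v‖ < 1 := by simpa [mem_ball, dist_zero_right] using hv
  refine ⟨⟪w, v⟫, ?_, ?_⟩
  · rw [mem_Icc, ← abs_le]
    calc |⟪w, v⟫| ≤ ‖w‖ * ‖v‖ := abs_real_inner_le_norm w v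
      _ ≤ ‖w‖ * 1 := by
          exact mul_le_mul_of_nonneg_left (le_of_lt hvlt) (norm_nonneg w)
      _ = ‖w‖ := mul_one _
  · simp [ContinuousLinearMap.smulRight_apply]

lemma norm_smul_clm (c : ℝ) (f : H →L[ℝ] H) : ‖c • f‖ = |c| * ‖f‖ := by
  have := norm_smul c f
  rwa [Real.norm_eq_abs] at this

lemma rhoP_lower (T A : KH H) (hT : T ≠ 0) {x : H} (hx1 : ‖x‖ = 1)
    (hx : ‖(T : H →L[ℝ] H) x‖ = ‖T‖) :
    ⟪(T : H →L[ℝ] H) x, (A : H →L[ℝ] H) x⟫ ≤ rhoP T A := by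
  have hT0 : (0:ℝ) < ‖T‖ := norm_pos_iff.mpr hT
  set u : H := (T : H →L[ℝ] H) x with hu
  set v : H := (A : H →L[ℝ] H) x with hv
  have hun : ‖u‖ = ‖T‖ := hx
  have hu0 : u ≠ 0 := by
    rw [← norm_pos_iff, hun]; exact hT0
  have h1 := tendsto_norm_slope u v hu0
  have h1' : Tendsto (fun t : ℝ => ‖T‖ * ((‖u + t • v‖ - ‖u‖) / t))
      (nhdsWithin (0:ℝ) (Ioi 0)) (nhds ⟪u, v⟫) := by
    have := h1.const_mul ‖T‖
    have heq : ‖T‖ * (⟪u, v⟫ / ‖u‖) = ⟪u, v⟫ := by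
      rw [hun, mul_comm]
      exact div_mul_cancel₀ _ (ne_of_gt hT0)
    rwa [heq] at this
  have h2 := rhoP_tendsto (X := KH H) T A
  refine le_of_tendsto_of_tendsto h1' h2 ?_
  filter_upwards [self_mem_nhdsWithin] with t ht
  have ht0 : (0:ℝ) < t := ht
  have hle : ‖u + t • v‖ ≤ ‖(T + t • A : KH H)‖ := by
    have h3 : u + t • v = ((T + t • A : KH H) : H →L[ℝ] H) x := by
      simp [hu, hv]
    rw [h3]
    calc ‖((T + t • A : KH H) : H →L[ℝ] H) x‖
        ≤ ‖((T + t • A : KH H) : H →L[ℝ] H)‖ * ‖x‖ :=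
          ContinuousLinearMap.le_opNorm _ _
      _ = ‖(T + t • A : KH H)‖ := by rw [hx1, mul_one]; rfl
  have hun' : ‖u‖ = ‖T‖ := hun
  rw [mul_div_assoc]
  apply mul_le_mul_of_nonneg_left _ (le_of_lt hT0)
  rw [div_le_div_iff₀ ht0 ht0]
  nlinarith [hle, hun]

lemma rhoP_upper (T A : KH H) (hT : T ≠ 0) (x₀ : H) (hx₀1 : ‖x₀‖ = 1)
    (hM : ∀ z : H, ‖z‖ = 1 → ‖(T : H →L[ℝ] H) z‖ = ‖T‖ → z = x₀ ∨ z = -x₀) :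
    rhoP T A ≤ ⟪(T : H →L[ℝ] H) x₀, (A : H →L[ℝ] H) x₀⟫ := by
  classical
  have hT0 : (0:ℝ) < ‖T‖ := norm_pos_iff.mpr hT
  set T' : H →L[ℝ] H := (T : H →L[ℝ] H) with hT'def
  set A' : H →L[ℝ] H := (A : H →L[ℝ] H) with hA'def
  set t : ℕ → ℝ := fun n => ((n:ℝ) + 1)⁻¹ with htdef
  have ht0 : ∀ n, (0:ℝ) < t n := by
    intro n
    have : (0:ℝ) < (n:ℝ) + 1 := by positivity
    exact inv_pos.mpr this
  have ht00 : Tendsto t atTop (nhds 0) := by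
    have : Tendsto (fun n : ℕ => (n:ℝ) + 1) atTop atTop :=
      tendsto_atTop_add_const_right _ 1 tendsto_natCast_atTop_atTop
    exact tendsto_inv_atTop_zero.comp this
  have htIoi : Tendsto t atTop (nhdsWithin (0:ℝ) (Ioi 0)) :=
    tendsto_nhdsWithin_iff.mpr ⟨ht00, Eventually.of_forall fun n => ht0 n⟩
  set B : ℕ → (H →L[ℝ] H) := fun n => T' + t n • A' with hBdef
  have hBc : ∀ n, IsCompactOperator ⇑(B n) := by
    intro n
    have h1 : IsCompactOperator ⇑T' := T.2
    have h2 : IsCompactOperator ⇑(t n • A') := by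
      have := (A.2 : IsCompactOperator ⇑A').smul (t n)
      exact this
    exact (h1.add h2)
  -- eventual nonvanishing
  have hBlow : ∀ n, ‖T‖ - t n * ‖A'‖ ≤ ‖B n‖ := by
    intro n
    have h1 : ‖T'‖ ≤ ‖B n‖ + ‖t n • A'‖ := by
      have heq : B n - t n • A' = T' := by
        simp only [hBdef]
        exact add_sub_cancel_right _ _
      calc ‖T'‖ = ‖B n - t n • A'‖ := by rw [heq]
        _ ≤ ‖B n‖ + ‖t n • A'‖ := norm_sub_le _ _
    have h2 : ‖t n • A'‖ = t n * ‖A'‖ := by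
      rw [norm_smul_clm, abs_of_pos (ht0 n)]
    have h3 : ‖T'‖ = ‖T‖ := rfl
    rw [h2] at h1
    linarith
  have hBhigh : ∀ n, ‖B n‖ ≤ ‖T‖ + t n * ‖A'‖ := by
    intro n
    calc ‖B n‖ ≤ ‖T'‖ + ‖t n • A'‖ := norm_add_le _ _
      _ = ‖T‖ + t n * ‖A'‖ := by
          rw [norm_smul_clm, abs_of_pos (ht0 n)]; rfl
  have hevpos : ∀ᶠ n in atTop, 0 < ‖B n‖ := by
    have h1 : Tendsto (fun n => t n * ‖A'‖) atTop (nhds 0) := by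
      simpa using ht00.mul_const ‖A'‖
    have h2 : ∀ᶠ n in atTop, t n * ‖A'‖ < ‖T‖ := h1.eventually_lt_const hT0
    filter_upwards [h2] with n hn
    have := hBlow n
    linarith
  -- choose near-attaining vectors
  have hex : ∀ n : ℕ, ∃ xx : H, ‖xx‖ = 1 ∧ (B n ≠ 0 → ‖B n xx‖ = ‖B n‖) := by
    intro n
    by_cases hB : B n = 0
    · exact ⟨x₀, hx₀1, fun h => absurd hB h⟩
    · obtain ⟨z, hz1, hz2⟩ := compact_exists_norm_eq (B n) (hBc n) hB
      exact ⟨z, hz1, fun _ => hz2⟩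
  choose xs hxs1 hxs2 using hex
  have hBne : ∀ᶠ n in atTop, B n ≠ 0 := by
    filter_upwards [hevpos] with n hn
    exact norm_pos_iff.mp hn
  -- ‖T' (xs n)‖ → ‖T‖
  have hTlim : Tendsto (fun n => ‖T' (xs n)‖) atTop (nhds ‖T‖) := by
    have hup : ∀ n, ‖T' (xs n)‖ ≤ ‖T‖ := by
      intro n
      calc ‖T' (xs n)‖ ≤ ‖T'‖ * ‖xs n‖ := T'.le_opNorm _
        _ = ‖T‖ := by rw [hxs1 n, mul_one]; rfl
    have hlow : ∀ᶠ n in atTop, ‖T‖ - 2 * (t n * ‖A'‖) ≤ ‖T' (xs n)‖ := by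
      filter_upwards [hBne] with n hn
      have h1 : ‖B n (xs n)‖ = ‖B n‖ := hxs2 n hn
      have h2 : ‖B n (xs n)‖ ≤ ‖T' (xs n)‖ + ‖t n • A' (xs n)‖ := by
        have : B n (xs n) = T' (xs n) + t n • A' (xs n) := by
          simp [hBdef]
        rw [this]
        exact norm_add_le _ _
      have h3 : ‖t n • A' (xs n)‖ ≤ t n * ‖A'‖ := by
        rw [norm_smul, Real.norm_eq_abs, abs_of_pos (ht0 n)]
        have : ‖A' (xs n)‖ ≤ ‖A'‖ := by
          calc ‖A' (xs n)‖ ≤ ‖A'‖ * ‖xs n‖ := A'.le_opNorm _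
            _ = ‖A'‖ := by rw [hxs1 n, mul_one]
        exact mul_le_mul_of_nonneg_left this (le_of_lt (ht0 n))
      have h4 := hBlow n
      linarith [h1 ▸ h2]
    have hlowlim : Tendsto (fun n => ‖T‖ - 2 * (t n * ‖A'‖)) atTop (nhds ‖T‖) := by
      have h1 : Tendsto (fun n => 2 * (t n * ‖A'‖)) atTop (nhds 0) := by
        simpa using (ht00.mul_const ‖A'‖).const_mul 2
      have h2 := (tendsto_const_nhds (x := ‖T‖) (f := atTop (α := ℕ))).sub h1
      simpa using h2
    exact tendsto_of_tendsto_of_tendsto_of_le_of_le' hlowlim tendsto_const_nhds hlow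
      (Eventually.of_forall hup)
  -- extract subsequence
  obtain ⟨z, hz1, hz2, φ, hφ, hxz⟩ :=
    compact_attain_subseq T' T.2 hT0 xs hxs1 hTlim
  -- the limit value
  have hzval : ⟪T' z, A' z⟫ = ⟪T' x₀, A' x₀⟫ := by
    rcases hM z hz1 hz2 with h | h
    · rw [h]
    · rw [h]; simp
  -- limits along the subsequence
  have htφ : Tendsto (fun n => t (φ n)) atTop (nhds 0) := ht00.comp hφ.tendsto_atTop
  have hxφ : Tendsto (fun n => xs (φ n)) atTop (nhds z) := hxz
  have hTxφ : Tendsto (fun n => T' (xs (φ n))) atTop (nhds (T' z)) :=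
    (T'.continuous.tendsto z).comp hxφ
  have hAxφ : Tendsto (fun n => A' (xs (φ n))) atTop (nhds (A' z)) :=
    (A'.continuous.tendsto z).comp hxφ
  have hBxφ : Tendsto (fun n => B (φ n) (xs (φ n))) atTop (nhds (T' z)) := by
    have h1 : Tendsto (fun n => t (φ n) • A' (xs (φ n))) atTop (nhds ((0:ℝ) • A' z)) :=
      htφ.smul hAxφ
    have h2 := hTxφ.add h1
    simp only [zero_smul, add_zero] at h2
    have heq : (fun n => B (φ n) (xs (φ n)))
        = fun n => T' (xs (φ n)) + t (φ n) • A' (xs (φ n)) := by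
      funext n; simp [hBdef]
    rw [heq]
    exact h2
  have hBnφ : Tendsto (fun n => ‖B (φ n)‖) atTop (nhds ‖T‖) := by
    have hl : Tendsto (fun n => ‖T‖ - t (φ n) * ‖A'‖) atTop (nhds ‖T‖) := by
      have h1 : Tendsto (fun n => t (φ n) * ‖A'‖) atTop (nhds 0) := by
        simpa using htφ.mul_const ‖A'‖
      simpa using (tendsto_const_nhds (x := ‖T‖) (f := atTop (α := ℕ))).sub h1
    have hh : Tendsto (fun n => ‖T‖ + t (φ n) * ‖A'‖) atTop (nhds ‖T‖) := by
      have h1 : Tendsto (fun n => t (φ n) * ‖A'‖) atTop (nhds 0) := by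
        simpa using htφ.mul_const ‖A'‖
      simpa using (tendsto_const_nhds (x := ‖T‖) (f := atTop (α := ℕ))).add h1
    exact tendsto_of_tendsto_of_tendsto_of_le_of_le hl hh
      (fun n => hBlow (φ n)) (fun n => hBhigh (φ n))
  -- RHS sequence
  have hr : Tendsto (fun n => ‖T‖ * ⟪B (φ n) (xs (φ n)), A' (xs (φ n))⟫ / ‖B (φ n)‖)
      atTop (nhds ⟪T' x₀, A' x₀⟫) := by
    have hinner : Tendsto (fun n => ⟪B (φ n) (xs (φ n)), A' (xs (φ n))⟫) atTop
        (nhds ⟪T' z, A' z⟫) := hBxφ.inner hAxφ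
    have h1 := (hinner.const_mul ‖T‖).div hBnφ (ne_of_gt hT0)
    have heq : ‖T‖ * ⟪T' z, A' z⟫ / ‖T‖ = ⟪T' x₀, A' x₀⟫ := by
      rw [mul_comm, mul_div_assoc, div_self (ne_of_gt hT0), mul_one, hzval]
    rwa [heq] at h1
  -- LHS sequence tends to rhoP T A
  have hl : Tendsto (fun n => ‖T‖ * (‖(T + t (φ n) • A : KH H)‖ - ‖T‖) / t (φ n))
      atTop (nhds (rhoP T A)) :=
    (rhoP_tendsto (X := KH H) T A).comp (htIoi.comp hφ.tendsto_atTop)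
  -- the key eventual inequality
  refine le_of_tendsto_of_tendsto hl hr ?_
  filter_upwards [hφ.tendsto_atTop.eventually hevpos] with n hn
  set m : ℕ := φ n with hm
  have hBm0 : B m ≠ 0 := norm_pos_iff.mp hn
  set a : H := B m (xs m) with ha
  have hna : ‖a‖ = ‖B m‖ := hxs2 m hBm0
  have hTx : ‖T' (xs m)‖ ≤ ‖T‖ := by
    calc ‖T' (xs m)‖ ≤ ‖T'‖ * ‖xs m‖ := T'.le_opNorm _
      _ = ‖T‖ := by rw [hxs1 m, mul_one]; rfl
  have hkey : ‖B m‖ * (‖B m‖ - ‖T‖) ≤ t m * ⟪a, A' (xs m)⟫ := by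
    have h2 : a - T' (xs m) = t m • A' (xs m) := by
      simp [ha, hBdef]
    have h3 : ⟪a, a - T' (xs m)⟫ = t m * ⟪a, A' (xs m)⟫ := by
      rw [h2, real_inner_smul_right]
    have h4 : ⟪a, a - T' (xs m)⟫ = ‖a‖ ^ 2 - ⟪a, T' (xs m)⟫ := by
      rw [inner_sub_right, real_inner_self_eq_norm_sq]
    have h5 : ⟪a, T' (xs m)⟫ ≤ ‖a‖ * ‖T' (xs m)‖ := real_inner_le_norm _ _
    nlinarith [norm_nonneg a, hna]
  have hBcoe : ‖(T + t m • A : KH H)‖ = ‖B m‖ := rfl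
  rw [hBcoe, mul_div_assoc, mul_div_assoc]
  apply mul_le_mul_of_nonneg_left _ (le_of_lt hT0)
  rw [div_le_div_iff₀ (ht0 m) hn]
  nlinarith [hkey]

end AuxHilbert

/-- A nonzero compact operator T on a real Hilbert space H is ρ₊-smooth in K(H) iff
its norm attainment set is { x₀, -x₀ } for some unit vector x₀. -/
theorem rhoP_smooth_iff_norm_attained_at_antipodal_pair
    {H : Type*} [NormedAddCommGroup H] [InnerProductSpace ℝ H] [CompleteSpace H]
    (T : KH H) (hT : T ≠ 0) :
    (∀ A B : KH H, rhoP T (A + B) = rhoP T A + rhoP T B) ↔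
      ∃ x₀ : H, ‖x₀‖ = 1 ∧
        {x : H | ‖x‖ = 1 ∧ ‖(T : H →L[ℝ] H) x‖ = ‖T‖} = {x₀, -x₀} := by
  have hTc : (T : H →L[ℝ] H) ≠ 0 := by simpa [Submodule.coe_eq_zero] using hT
  have hT0 : (0:ℝ) < ‖T‖ := norm_pos_iff.mpr hT
  constructor
  · intro hadd
    obtain ⟨x₀, hx1, hx2⟩ := compact_exists_norm_eq (T : H →L[ℝ] H) T.2 hTc
    replace hx2 : ‖(T : H →L[ℝ] H) x₀‖ = ‖T‖ := hx2
    refine ⟨x₀, hx1, ?_⟩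
    have hzero : rhoP T (0 : KH H) = 0 := rhoP_zero_right T
    have hneg : ∀ A : KH H, rhoP T (-A) = - rhoP T A := by
      intro A
      have h1 := hadd A (-A)
      rw [add_neg_cancel, hzero] at h1
      linarith
    have hfx : ∀ y : H, ‖y‖ = 1 → ‖(T : H →L[ℝ] H) y‖ = ‖T‖ → ∀ A : KH H,
        ⟪(T : H →L[ℝ] H) y, (A : H →L[ℝ] H) y⟫
          = ⟪(T : H →L[ℝ] H) x₀, (A : H →L[ℝ] H) x₀⟫ := by
      intro y hy1 hy2 A
      have l1 := rhoP_lower T A hT hy1 hy2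
      have l2 := rhoP_lower T (-A) hT hy1 hy2
      have l3 := rhoP_lower T A hT hx1 hx2
      have l4 := rhoP_lower T (-A) hT hx1 hx2
      have e1 : ∀ w : H, ((-A : KH H) : H →L[ℝ] H) w = -((A : H →L[ℝ] H) w) := fun w => rfl
      rw [e1, inner_neg_right, hneg A] at l2 l4
      linarith
    ext y
    simp only [mem_setOf_eq, mem_insert_iff, mem_singleton_iff]
    constructor
    · rintro ⟨hy1, hy2⟩
      set A : KH H := ⟨(innerSL ℝ x₀).smulRight ((T : H →L[ℝ] H) x₀),
        rankone_mem x₀ _⟩ with hA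
      have hAw : ∀ w : H, (A : H →L[ℝ] H) w = ⟪x₀, w⟫ • (T : H →L[ℝ] H) x₀ := by
        intro w
        simp [hA, ContinuousLinearMap.smulRight_apply]
      have heq := hfx y hy1 hy2 A
      rw [hAw y, hAw x₀] at heq
      have hxx : ⟪x₀, x₀⟫ = (1:ℝ) := by
        rw [real_inner_self_eq_norm_sq, hx1]; norm_num
      rw [real_inner_smul_right, real_inner_smul_right, hxx, one_mul] at heq
      have h1 : ⟪x₀, y⟫ * ⟪(T : H →L[ℝ] H) y, (T : H →L[ℝ] H) x₀⟫ = ‖T‖^2 := by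
        rw [heq, real_inner_self_eq_norm_sq, hx2]
      have hcs1 : |⟪x₀, y⟫| ≤ 1 := by
        have h := abs_real_inner_le_norm x₀ y
        rw [hx1, hy1] at h; simpa using h
      have hcs2 : |⟪(T : H →L[ℝ] H) y, (T : H →L[ℝ] H) x₀⟫| ≤ ‖T‖^2 := by
        have h := abs_real_inner_le_norm ((T : H →L[ℝ] H) y) ((T : H →L[ℝ] H) x₀)
        rw [hy2, hx2] at h
        nlinarith
      have habs : |⟪x₀, y⟫| = 1 := by
        have hmul : |⟪x₀, y⟫| * |⟪(T : H →L[ℝ] H) y, (T : H →L[ℝ] H) x₀⟫| = ‖T‖^2 := by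
          rw [← abs_mul, h1, abs_of_pos (by positivity)]
        have key : 1 ≤ |⟪x₀, y⟫| := by
          have h2 : ‖T‖^2 ≤ |⟪x₀, y⟫| * ‖T‖^2 := by
            calc ‖T‖^2 = |⟪x₀, y⟫| * |⟪(T : H →L[ℝ] H) y, (T : H →L[ℝ] H) x₀⟫| := hmul.symm
              _ ≤ |⟪x₀, y⟫| * ‖T‖^2 := mul_le_mul_of_nonneg_left hcs2 (abs_nonneg _)
          nlinarith [h2, pow_pos hT0 2]
        exact le_antisymm hcs1 key
      rcases (abs_eq (by norm_num : (0:ℝ) ≤ 1)).mp habs with h | h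
      · left
        have : ‖y - x₀‖^2 = 0 := by
          rw [norm_sub_sq_real, hy1, hx1, real_inner_comm]
          rw [h]; norm_num
        have := pow_eq_zero_iff (n := 2) (by norm_num) |>.mp this
        rw [norm_eq_zero, sub_eq_zero] at this
        exact this
      · right
        have : ‖y + x₀‖^2 = 0 := by
          rw [norm_add_sq_real, hy1, hx1, real_inner_comm]
          rw [h]; norm_num
        have := pow_eq_zero_iff (n := 2) (by norm_num) |>.mp this
        rw [norm_eq_zero] at this
        have := eq_neg_of_add_eq_zero_left this
        exact this
    · rintro (rfl | rfl)
      · exact ⟨hx1, hx2⟩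
      · refine ⟨by simpa using hx1, ?_⟩
        rw [map_neg, norm_neg]
        exact hx2
  · rintro ⟨x₀, hx1, hM⟩
    have hx₀mem : x₀ ∈ {x : H | ‖x‖ = 1 ∧ ‖(T : H →L[ℝ] H) x‖ = ‖T‖} := by
      rw [hM]; left; rfl
    obtain ⟨_, hx2⟩ := hx₀mem
    have hMall : ∀ z : H, ‖z‖ = 1 → ‖(T : H →L[ℝ] H) z‖ = ‖T‖ → z = x₀ ∨ z = -x₀ := by
      intro z h1 h2
      have hz : z ∈ {x : H | ‖x‖ = 1 ∧ ‖(T : H →L[ℝ] H) x‖ = ‖T‖} := ⟨h1, h2⟩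
      rw [hM] at hz
      simpa using hz
    have hval : ∀ A : KH H, rhoP T A = ⟪(T : H →L[ℝ] H) x₀, (A : H →L[ℝ] H) x₀⟫ :=
      fun A => le_antisymm (rhoP_upper T A hT x₀ hx1 hMall) (rhoP_lower T A hT hx1 hx2)
    intro A B
    rw [hval, hval, hval]
    have hAB : ((A + B : KH H) : H →L[ℝ] H) x₀
        = (A : H →L[ℝ] H) x₀ + (B : H →L[ℝ] H) x₀ := rfl
    rw [hAB, inner_add_right]
end

section
/- Let Y be a real normed linear space, let n be a positive integer, and let T : ℓ₁ⁿ → Y be a nonzero bounded linear operator, where ℓ₁ⁿ is ℝⁿ with the norm ‖(a₁,…,aₙ)‖₁ = Σ|aᵢ|. Then T is ρ₊-smooth in L(ℓ₁ⁿ, Y) if and only if there exists an extreme point u₀ of the closed unit ball of ℓ₁ⁿ such that M_T = {u₀, −u₀} and Tu₀ is a ρ₊-smooth point of Y. -/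
open Filter Set

/-- ℓ₁ⁿ : ℝⁿ with the norm ‖(a₁,…,aₙ)‖₁ = Σᵢ |aᵢ|. -/
noncomputable abbrev l1 (n : ℕ) := PiLp 1 (fun _ : Fin n => ℝ)

/-! ### Auxiliary material -/

section Aux
variable {n : ℕ} {Y : Type*} [NormedAddCommGroup Y] [NormedSpace ℝ Y]

/-- The standard basis vectors of `l1 n`. -/
noncomputable def ee {n : ℕ} (i : Fin n) : l1 n := (WithLp.equiv 1 _).symm (Pi.single i 1)

lemma ee_apply {n : ℕ} (i j : Fin n) : (ee i) j = if j = i then 1 else 0 := by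
  simp [ee, Pi.single_apply]

lemma l1_norm {n : ℕ} (x : l1 n) : ‖x‖ = ∑ i, |x i| := by
  rw [PiLp.norm_eq_sum (by norm_num)]
  simp [Real.norm_eq_abs]

lemma norm_ee {n : ℕ} (i : Fin n) : ‖ee i‖ = 1 := by
  rw [l1_norm, Finset.sum_congr rfl (fun j _ => by rw [ee_apply])]
  simp [apply_ite abs, Finset.sum_ite_eq']

lemma decomp {n : ℕ} (x : l1 n) : x = ∑ i, x i • ee i := by
  ext j
  rw [WithLp.ofLp_sum, Finset.sum_apply]
  rw [Finset.sum_congr rfl (fun k _ => by show x k * (ee k) j = _; rw [ee_apply])]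
  simp [apply_ite abs, Finset.sum_ite_eq']

lemma map_decomp (S : l1 n →L[ℝ] Y) (x : l1 n) : S x = ∑ i, x i • S (ee i) := by
  conv_lhs => rw [decomp x]
  rw [map_sum]
  simp

lemma opNorm_le' (S : l1 n →L[ℝ] Y) {M : ℝ} (hM : 0 ≤ M) (h : ∀ i, ‖S (ee i)‖ ≤ M) :
    ‖S‖ ≤ M := by
  refine S.opNorm_le_bound hM (fun x => ?_)
  calc ‖S x‖ = ‖∑ i, x i • S (ee i)‖ := by rw [map_decomp]
    _ ≤ ∑ i, ‖x i • S (ee i)‖ := norm_sum_le _ _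
    _ = ∑ i, |x i| * ‖S (ee i)‖ := by simp [norm_smul]
    _ ≤ ∑ i, |x i| * M := Finset.sum_le_sum
        (fun i _ => mul_le_mul_of_nonneg_left (h i) (abs_nonneg _))
    _ = M * ‖x‖ := by
        rw [l1_norm, Finset.mul_sum]; exact Finset.sum_congr rfl (fun i _ => mul_comm _ _)

lemma norm_apply_ee_le (S : l1 n →L[ℝ] Y) (i : Fin n) : ‖S (ee i)‖ ≤ ‖S‖ := by
  have := S.le_opNorm (ee i)
  rwa [norm_ee, mul_one] at this

lemma exists_argmax (hn : 0 < n) (T : l1 n →L[ℝ] Y) : ∃ i₀ : Fin n, ‖T (ee i₀)‖ = ‖T‖ := by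
  obtain ⟨i₀, -, hmax⟩ := Finset.exists_max_image Finset.univ (fun i => ‖T (ee i)‖)
    ⟨⟨0, hn⟩, Finset.mem_univ _⟩
  exact ⟨i₀, le_antisymm (norm_apply_ee_le T i₀)
    (opNorm_le' T (norm_nonneg _) (fun i => hmax i (Finset.mem_univ _)))⟩

lemma limUnder_congr'' {α X : Type*} [TopologicalSpace X] [Nonempty X] {F : Filter α}
    {f g : α → X} (h : f =ᶠ[F] g) : limUnder F f = limUnder F g := by
  simp only [limUnder, Filter.map_congr h]

lemma limUnder_const_of_eventually {f : ℝ → ℝ} {c : ℝ}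
    (h : ∀ᶠ t in nhdsWithin (0:ℝ) (Set.Ioi 0), f t = c) :
    limUnder (nhdsWithin (0:ℝ) (Set.Ioi 0)) f = c :=
  Filter.Tendsto.limUnder_eq (Filter.Tendsto.congr' (EventuallyEq.symm h) tendsto_const_nhds)

lemma rhoP_neg {X : Type*} [NormedAddCommGroup X] [NormedSpace ℝ X] (x y : X) :
    rhoP (-x) y = rhoP x (-y) := by
  unfold rhoP
  congr 1
  funext t
  rw [norm_neg, show -x + t • y = -(x + t • (-y)) by module, norm_neg]

lemma rhoP_eq_of_norm_eventually {X X' : Type*} [NormedAddCommGroup X] [NormedSpace ℝ X]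
    [NormedAddCommGroup X'] [NormedSpace ℝ X'] {x : X} {y : X} {x' : X'} {y' : X'}
    (hn : ‖x‖ = ‖x'‖)
    (h : ∀ᶠ t in nhdsWithin (0:ℝ) (Set.Ioi 0), ‖x + t • y‖ = ‖x' + t • y'‖) :
    rhoP x y = rhoP x' y' := by
  unfold rhoP
  refine limUnder_congr'' ?_
  filter_upwards [h] with t ht
  rw [ht, hn]

lemma rhoP_of_linear_growth {X : Type*} [NormedAddCommGroup X] [NormedSpace ℝ X] {x y : X}
    (h : ∀ t : ℝ, 0 < t → ‖x + t • y‖ = (1 + t) * ‖x‖) :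
    rhoP x y = ‖x‖ * ‖x‖ := by
  unfold rhoP
  refine limUnder_const_of_eventually ?_
  filter_upwards [self_mem_nhdsWithin] with t (ht : t ∈ Set.Ioi (0:ℝ))
  rw [h t ht]
  have ht' : (t:ℝ) ≠ 0 := ne_of_gt ht
  field_simp
  ring

/-- The rank-one operator `x ↦ x i • y`. -/
noncomputable def coordOp {n : ℕ} {Y : Type*} [NormedAddCommGroup Y] [NormedSpace ℝ Y]
    (i : Fin n) (y : Y) : l1 n →L[ℝ] Y :=
  (PiLp.proj 1 (fun _ : Fin n => ℝ) i).smulRight y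

lemma coordOp_apply (i : Fin n) (y : Y) (x : l1 n) : coordOp i y x = x i • y := rfl

lemma coordOp_ee (i j : Fin n) (y : Y) :
    coordOp i y (ee j) = if j = i then y else 0 := by
  rw [coordOp_apply, ee_apply]
  by_cases h : i = j <;> simp [h, eq_comm]

lemma norm_special (T A : l1 n →L[ℝ] Y) {t : ℝ} (ht : 0 ≤ t) (i₀ : Fin n)
    (hmax : ‖T (ee i₀)‖ = ‖T‖) (hAi : A (ee i₀) = T (ee i₀))
    (hother : ∀ j, A (ee j) = T (ee j) ∨ A (ee j) = 0) :
    ‖T + t • A‖ = (1 + t) * ‖T‖ := by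
  have h1t : (0:ℝ) ≤ 1 + t := by linarith
  refine le_antisymm ?_ ?_
  · refine opNorm_le' _ (by positivity) (fun j => ?_)
    have : (T + t • A) (ee j) = T (ee j) + t • A (ee j) := by simp
    rw [this]
    rcases hother j with h | h
    · rw [h, ← one_smul ℝ (T (ee j)), smul_smul, ← add_smul, norm_smul]
      simp only [one_mul, mul_one]
      rw [Real.norm_eq_abs, abs_of_nonneg h1t]
      exact mul_le_mul_of_nonneg_left (norm_apply_ee_le T j) h1t
    · rw [h, smul_zero, add_zero]
      calc ‖T (ee j)‖ ≤ ‖T‖ := norm_apply_ee_le T j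
        _ ≤ (1 + t) * ‖T‖ := by nlinarith [norm_nonneg T]
  · have : (T + t • A) (ee i₀) = (1 + t) • T (ee i₀) := by
      simp [hAi, add_smul]
    calc (1 + t) * ‖T‖ = ‖(1 + t) • T (ee i₀)‖ := by
          rw [norm_smul, Real.norm_eq_abs, abs_of_nonneg h1t, hmax]
      _ = ‖(T + t • A) (ee i₀)‖ := by rw [this]
      _ ≤ ‖T + t • A‖ := norm_apply_ee_le _ i₀

lemma norm_eventually_eq (T A : l1 n →L[ℝ] Y) (hT : T ≠ 0) (i₀ : Fin n)
    (hmax : ‖T (ee i₀)‖ = ‖T‖) (huniq : ∀ j, j ≠ i₀ → ‖T (ee j)‖ < ‖T‖) :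
    ∀ᶠ t in nhdsWithin (0:ℝ) (Set.Ioi 0),
      ‖T + t • A‖ = ‖T (ee i₀) + t • A (ee i₀)‖ := by
  have hTpos : 0 < ‖T‖ := norm_pos_iff.2 hT
  set ε : ℝ := Finset.univ.inf' (Finset.univ_nonempty_iff.mpr ⟨i₀⟩)
    (fun j => if j = i₀ then ‖T‖ else ‖T‖ - ‖T (ee j)‖) with hε
  have hεpos : 0 < ε := by
    rw [hε, Finset.lt_inf'_iff]
    intro j _
    split
    · exact hTpos
    · next h => linarith [huniq j h]
  have hεle : ∀ j, j ≠ i₀ → ‖T (ee j)‖ + ε ≤ ‖T‖ := by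
    intro j hj
    have := Finset.inf'_le (b := j)
      (f := fun j => if j = i₀ then ‖T‖ else ‖T‖ - ‖T (ee j)‖) (Finset.mem_univ j)
    rw [if_neg hj] at this
    rw [← hε] at this
    linarith
  set δ : ℝ := ε / (2 * (‖A‖ + 1)) with hδ
  have hδpos : 0 < δ := by positivity
  filter_upwards [Ioo_mem_nhdsGT hδpos]
    with t ht
  obtain ⟨ht0, htδ⟩ := ht
  have hApp : ∀ j, (T + t • A) (ee j) = T (ee j) + t • A (ee j) := fun j => by simp
  have key : 2 * t * ‖A‖ < ε := by
    have h1 : t * (2 * (‖A‖ + 1)) < ε := by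
      rw [hδ] at htδ
      calc t * (2 * (‖A‖ + 1)) < δ * (2 * (‖A‖ + 1)) := by
            apply mul_lt_mul_of_pos_right htδ; positivity
        _ = ε := by rw [hδ]; field_simp
    nlinarith [norm_nonneg A]
  refine le_antisymm ?_ ?_
  · refine opNorm_le' _ (norm_nonneg _) (fun j => ?_)
    rw [hApp j]
    by_cases hj : j = i₀
    · subst hj; exact le_refl _
    · calc ‖T (ee j) + t • A (ee j)‖ ≤ ‖T (ee j)‖ + t * ‖A (ee j)‖ := by
            refine (norm_add_le _ _).trans ?_
            rw [norm_smul, Real.norm_eq_abs, abs_of_nonneg (le_of_lt ht0)]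
        _ ≤ (‖T‖ - ε) + t * ‖A‖ := by
            have := hεle j hj
            have := norm_apply_ee_le A j
            nlinarith
        _ ≤ ‖T‖ - t * ‖A‖ := by nlinarith
        _ ≤ ‖T (ee i₀)‖ - t * ‖A (ee i₀)‖ := by
            have := norm_apply_ee_le A i₀
            rw [hmax]
            nlinarith
        _ ≤ ‖T (ee i₀) + t • A (ee i₀)‖ := by
            have h1 : ‖T (ee i₀)‖ ≤ ‖T (ee i₀) + t • A (ee i₀)‖ + ‖t • A (ee i₀)‖ :=
              norm_le_add_norm_add _ _
            rw [norm_smul, Real.norm_eq_abs, abs_of_nonneg (le_of_lt ht0)] at h1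
            linarith
  · rw [← hApp i₀]
    exact norm_apply_ee_le _ i₀

lemma sum_abs_ite {n : ℕ} (i : Fin n) (f : Fin n → ℝ) :
    ∑ k, (if k = i then (0:ℝ) else |f k|) = (∑ k, |f k|) - |f i| := by
  have : ∀ k : Fin n, (if k = i then (0:ℝ) else |f k|) = |f k| - (if k = i then |f i| else 0) := by
    intro k; by_cases h : k = i <;> simp [h]
  rw [Finset.sum_congr rfl (fun k _ => this k), Finset.sum_sub_distrib, Finset.sum_ite_eq']
  simp

lemma eq_smul_ee_of {n : ℕ} (x : l1 n) (i : Fin n) (h : ∀ j, j ≠ i → x j = 0) :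
    x = x i • ee i := by
  ext j
  show x j = x i * (ee i) j
  rw [ee_apply]
  by_cases hj : j = i
  · subst hj; simp
  · simp [hj, h j hj]

lemma eq_ee_of {n : ℕ} (x : l1 n) (i : Fin n) (hx : ‖x‖ ≤ 1) (hi : x i = 1) : x = ee i := by
  have hsum : ∑ k, |x k| ≤ 1 := by rw [← l1_norm]; exact hx
  have hz : ∀ j, j ≠ i → x j = 0 := by
    intro j hj
    by_contra hj0
    have h1 : |x i| + |x j| ≤ ∑ k, |x k| := by
      rw [show |x i| + |x j| = ∑ k ∈ ({i, j} : Finset (Fin n)), |x k| from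
        (Finset.sum_pair (f := fun k => |x k|) (Ne.symm hj)).symm]
      exact Finset.sum_le_sum_of_subset_of_nonneg (Finset.subset_univ _)
        (fun k _ _ => abs_nonneg _)
    rw [hi] at h1
    simp only [abs_one] at h1
    have := abs_pos.2 hj0
    linarith
  have := eq_smul_ee_of x i hz
  rw [hi, one_smul] at this
  exact this

lemma ee_extreme {n : ℕ} (i : Fin n) :
    ee i ∈ (Metric.closedBall (0 : l1 n) 1).extremePoints ℝ := by
  rw [mem_extremePoints]
  constructor
  · rw [Metric.mem_closedBall, dist_zero_right, norm_ee]
  intro x₁ h₁ x₂ h₂ hseg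
  rw [Metric.mem_closedBall, dist_zero_right] at h₁ h₂
  obtain ⟨a, b, ha, hb, hab, heq⟩ := hseg
  have hcoord : a * x₁ i + b * x₂ i = 1 := by
    have := congrArg (fun v : l1 n => v i) heq
    simpa [ee_apply] using this
  have hb1 : ∀ (x : l1 n), ‖x‖ ≤ 1 → x i ≤ 1 := by
    intro x hx
    have : |x i| ≤ ∑ k, |x k| :=
      Finset.single_le_sum (f := fun k => |x k|) (fun k _ => abs_nonneg _) (Finset.mem_univ i)
    rw [← l1_norm] at this
    have := le_trans this hx
    exact le_trans (le_abs_self _) this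
  have hx1 : x₁ i = 1 := by
    by_contra h
    have hlt : x₁ i < 1 := lt_of_le_of_ne (hb1 x₁ h₁) h
    nlinarith [hb1 x₂ h₂]
  have hx2 : x₂ i = 1 := by
    by_contra h
    have hlt : x₂ i < 1 := lt_of_le_of_ne (hb1 x₂ h₂) h
    nlinarith [hb1 x₁ h₁]
  exact ⟨eq_ee_of x₁ i h₁ hx1, eq_ee_of x₂ i h₂ hx2⟩

lemma extreme_classify {n : ℕ} (u : l1 n)
    (hu : u ∈ (Metric.closedBall (0 : l1 n) 1).extremePoints ℝ) (hnorm : ‖u‖ = 1) :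
    ∃ i : Fin n, u = ee i ∨ u = -ee i := by
  have hsum : ∑ k, |u k| = 1 := by rw [← l1_norm, hnorm]
  have hex : ∃ i, u i ≠ 0 := by
    by_contra h
    push_neg at h
    rw [Finset.sum_congr rfl (fun k _ => by rw [h k, abs_zero])] at hsum
    simp at hsum
  obtain ⟨i, hi⟩ := hex
  have hzero : ∀ j, j ≠ i → u j = 0 := by
    intro j hj
    by_contra hj0
    have ha0 : 0 < |u i| := abs_pos.2 hi
    have haj : 0 < |u j| := abs_pos.2 hj0
    have hpair : |u i| + |u j| ≤ 1 := by
      rw [← hsum, show |u i| + |u j| = ∑ k ∈ ({i, j} : Finset (Fin n)), |u k| from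
        (Finset.sum_pair (f := fun k => |u k|) (Ne.symm hj)).symm]
      exact Finset.sum_le_sum_of_subset_of_nonneg (Finset.subset_univ _)
        (fun k _ _ => abs_nonneg _)
    set a : ℝ := |u i| with ha
    have ha1 : a < 1 := by linarith
    set v : l1 n := (u i / a) • ee i with hv
    set w : l1 n := (1/(1-a)) • (u - u i • ee i) with hw
    have hvnorm : ‖v‖ = 1 := by
      rw [hv, norm_smul, norm_ee, mul_one, Real.norm_eq_abs, abs_div, abs_abs]
      field_simp
    have hsub : ∀ k : Fin n, (u - u i • ee i) k = if k = i then 0 else u k := by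
      intro k
      show u k - u i * (ee i) k = _
      rw [ee_apply]
      by_cases h : k = i
      · subst h; simp
      · simp [h]
    have hsubnorm : ‖u - u i • ee i‖ = 1 - a := by
      rw [l1_norm, Finset.sum_congr rfl (fun k _ => by rw [hsub k])]
      rw [Finset.sum_congr rfl (fun k _ => by rw [apply_ite abs, abs_zero]), sum_abs_ite, hsum]
    have h1a : (0:ℝ) < 1 - a := by linarith
    have hwnorm : ‖w‖ = 1 := by
      rw [hw, norm_smul, hsubnorm, Real.norm_eq_abs,
        abs_of_pos (by positivity : (0:ℝ) < 1/(1-a))]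
      field_simp
    have hvm : v ∈ Metric.closedBall (0 : l1 n) 1 := by
      rw [Metric.mem_closedBall, dist_zero_right, hvnorm]
    have hwm : w ∈ Metric.closedBall (0 : l1 n) 1 := by
      rw [Metric.mem_closedBall, dist_zero_right, hwnorm]
    have hseg : u ∈ openSegment ℝ v w := by
      refine ⟨a, 1 - a, ha0, by linarith, by ring, ?_⟩
      rw [hv, hw, smul_smul, smul_smul]
      have h1 : a * (u i / a) = u i := by field_simp
      have h2 : (1 - a) * (1 / (1 - a)) = 1 := by field_simp
      rw [h1, h2, one_smul]
      abel
    have hve := ((mem_extremePoints.1 hu).2 v hvm w hwm hseg).1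
    have : v j = u j := by rw [hve]
    rw [hv] at this
    have hvj : ((u i / a) • ee i) j = 0 := by
      show (u i / a) * (ee i) j = 0
      rw [ee_apply, if_neg hj, mul_zero]
    rw [hvj] at this
    exact hj0 this.symm
  have hx := eq_smul_ee_of u i hzero
  have habs : |u i| = 1 := by
    have := hnorm
    rw [hx, norm_smul, norm_ee, mul_one, Real.norm_eq_abs] at this
    exact this
  rcases abs_eq (zero_le_one (α := ℝ)) |>.1 habs with h | h
  · exact ⟨i, Or.inl (by rw [hx, h, one_smul])⟩
  · exact ⟨i, Or.inr (by rw [hx, h, neg_one_smul])⟩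

lemma MT_eq (T : l1 n →L[ℝ] Y) (i₀ : Fin n)
    (hmax : ‖T (ee i₀)‖ = ‖T‖) (huniq : ∀ j, j ≠ i₀ → ‖T (ee j)‖ < ‖T‖) :
    {x : l1 n | ‖x‖ = 1 ∧ ‖T x‖ = ‖T‖} = {ee i₀, -ee i₀} := by
  ext x
  simp only [Set.mem_setOf_eq, Set.mem_insert_iff, Set.mem_singleton_iff]
  constructor
  · rintro ⟨hx1, hxT⟩
    have hsum1 : ∑ i, |x i| = 1 := by rw [← l1_norm, hx1]
    have hle1 : ‖T x‖ ≤ ∑ i, |x i| * ‖T (ee i)‖ := by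
      rw [map_decomp T x]
      refine (norm_sum_le _ _).trans ?_
      refine Finset.sum_le_sum (fun i _ => ?_)
      rw [norm_smul, Real.norm_eq_abs]
    have hle2 : ∑ i, |x i| * ‖T (ee i)‖ ≤ ∑ i, |x i| * ‖T‖ :=
      Finset.sum_le_sum (fun i _ =>
        mul_le_mul_of_nonneg_left (norm_apply_ee_le T i) (abs_nonneg _))
    have hsum2 : ∑ i, |x i| * ‖T‖ = ‖T‖ := by
      rw [← Finset.sum_mul, hsum1, one_mul]
    have hge : ‖T‖ ≤ ∑ i, |x i| * ‖T (ee i)‖ := by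
      rw [← hxT]; exact hle1
    have heq : ∑ i, |x i| * ‖T (ee i)‖ = ∑ i, |x i| * ‖T‖ :=
      le_antisymm hle2 (by rw [hsum2]; exact hge)
    have hzero : ∀ j, j ≠ i₀ → x j = 0 := by
      intro j hj
      have hterm : ∀ i ∈ Finset.univ, |x i| * (‖T‖ - ‖T (ee i)‖) = 0 := by
        rw [← Finset.sum_eq_zero_iff_of_nonneg
          (fun i _ => mul_nonneg (abs_nonneg _) (sub_nonneg.2 (norm_apply_ee_le T i)))]
        have : ∑ i, |x i| * (‖T‖ - ‖T (ee i)‖)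
            = ∑ i, |x i| * ‖T‖ - ∑ i, |x i| * ‖T (ee i)‖ := by
          rw [← Finset.sum_sub_distrib]
          exact Finset.sum_congr rfl (fun i _ => by ring)
        rw [this, heq, sub_self]
      have := hterm j (Finset.mem_univ j)
      rcases mul_eq_zero.1 this with h | h
      · exact abs_eq_zero.1 h
      · exfalso; have := huniq j hj; linarith
    have hx := eq_smul_ee_of x i₀ hzero
    have habs : |x i₀| = 1 := by
      have := hx1
      rw [hx, norm_smul, norm_ee, mul_one, Real.norm_eq_abs] at this
      exact this
    rcases abs_eq (zero_le_one (α := ℝ)) |>.1 habs with h | h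
    · exact Or.inl (by rw [hx, h, one_smul])
    · exact Or.inr (by rw [hx, h, neg_one_smul])
  · rintro (h | h) <;> subst h
    · exact ⟨norm_ee i₀, hmax⟩
    · rw [norm_neg, map_neg, norm_neg]
      exact ⟨norm_ee i₀, hmax⟩

lemma ee_ne_ee {n : ℕ} {i j : Fin n} (hij : i ≠ j) : (ee i : l1 n) ≠ ee j := by
  intro he
  have hc : (ee i) i = (ee j) i := congrArg (fun v : l1 n => v i) he
  rw [ee_apply, ee_apply, if_pos rfl, if_neg hij] at hc
  exact one_ne_zero hc

lemma ee_ne_neg_ee {n : ℕ} (i j : Fin n) : (ee i : l1 n) ≠ -ee j := by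
  intro he
  have hc : (ee i) i = (-ee j) i := congrArg (fun v : l1 n => v i) he
  rw [ee_apply, if_pos rfl] at hc
  have hc' : (1:ℝ) = -((ee j) i) := hc
  rw [ee_apply] at hc'
  by_cases h : i = j
  · rw [if_pos h] at hc'; norm_num at hc'
  · rw [if_neg h] at hc'; norm_num at hc'

end Aux

/-- A nonzero T ∈ L(ℓ₁ⁿ, Y) is ρ₊-smooth iff M_T = {u₀, -u₀} for some extreme point u₀ of
the closed unit ball of ℓ₁ⁿ and T u₀ is a ρ₊-smooth point of Y. -/
theorem rhoP_smooth_iff_l1n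
    {Y : Type*} [NormedAddCommGroup Y] [NormedSpace ℝ Y] {n : ℕ} (hn : 0 < n)
    (T : l1 n →L[ℝ] Y) (hT : T ≠ 0) :
    (∀ A B : l1 n →L[ℝ] Y, rhoP T (A + B) = rhoP T A + rhoP T B) ↔
      ∃ u₀ : l1 n,
        u₀ ∈ (Metric.closedBall (0 : l1 n) 1).extremePoints ℝ ∧
        {x : l1 n | ‖x‖ = 1 ∧ ‖T x‖ = ‖T‖} = {u₀, -u₀} ∧
        (∀ y₁ y₂ : Y, rhoP (T u₀) (y₁ + y₂) = rhoP (T u₀) y₁ + rhoP (T u₀) y₂) := by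
  have hTpos : 0 < ‖T‖ := norm_pos_iff.2 hT
  constructor
  · intro h
    obtain ⟨i₀, hmax⟩ := exists_argmax hn T
    have huniq : ∀ j, j ≠ i₀ → ‖T (ee j)‖ < ‖T‖ := by
      intro j hj
      rcases lt_or_eq_of_le (norm_apply_ee_le T j) with h' | h'
      · exact h'
      exfalso
      set A := coordOp i₀ (T (ee i₀)) with hA
      set B := coordOp j (T (ee j)) with hB
      have hAee : ∀ k, A (ee k) = if k = i₀ then T (ee i₀) else 0 := fun k => by
        rw [hA, coordOp_ee]
      have hBee : ∀ k, B (ee k) = if k = j then T (ee j) else 0 := fun k => by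
        rw [hB, coordOp_ee]
      have rA : rhoP T A = ‖T‖ * ‖T‖ := by
        refine rhoP_of_linear_growth (fun t ht => ?_)
        refine norm_special T A (le_of_lt ht) i₀ hmax (by rw [hAee, if_pos rfl]) (fun k => ?_)
        rw [hAee]
        by_cases hk : k = i₀
        · subst hk; rw [if_pos rfl]; exact Or.inl rfl
        · rw [if_neg hk]; exact Or.inr rfl
      have rB : rhoP T B = ‖T‖ * ‖T‖ := by
        refine rhoP_of_linear_growth (fun t ht => ?_)
        refine norm_special T B (le_of_lt ht) j h' (by rw [hBee, if_pos rfl]) (fun k => ?_)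
        rw [hBee]
        by_cases hk : k = j
        · subst hk; rw [if_pos rfl]; exact Or.inl rfl
        · rw [if_neg hk]; exact Or.inr rfl
      have rAB : rhoP T (A + B) = ‖T‖ * ‖T‖ := by
        refine rhoP_of_linear_growth (fun t ht => ?_)
        refine norm_special T (A + B) (le_of_lt ht) i₀ hmax ?_ (fun k => ?_)
        · rw [ContinuousLinearMap.add_apply, hAee, hBee, if_pos rfl, if_neg hj.symm, add_zero]
        · rw [ContinuousLinearMap.add_apply, hAee, hBee]
          by_cases hk : k = i₀
          · rw [if_pos hk]
            subst hk
            rw [if_neg (Ne.symm hj), add_zero]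
            exact Or.inl rfl
          · rw [if_neg hk, zero_add]
            by_cases hk' : k = j
            · rw [if_pos hk']; subst hk'; exact Or.inl rfl
            · rw [if_neg hk']; exact Or.inr rfl
      have := h A B
      rw [rA, rB, rAB] at this
      nlinarith
    have transf : ∀ A : l1 n →L[ℝ] Y, rhoP T A = rhoP (T (ee i₀)) (A (ee i₀)) := fun A =>
      rhoP_eq_of_norm_eventually hmax.symm (norm_eventually_eq T A hT i₀ hmax huniq)
    refine ⟨ee i₀, ee_extreme i₀, MT_eq T i₀ hmax huniq, ?_⟩
    intro y₁ y₂
    have h1 := h (coordOp i₀ y₁) (coordOp i₀ y₂)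
    rw [transf (coordOp i₀ y₁ + coordOp i₀ y₂), transf (coordOp i₀ y₁),
      transf (coordOp i₀ y₂)] at h1
    simp only [ContinuousLinearMap.add_apply, coordOp_ee, if_pos rfl] at h1
    exact h1
  · rintro ⟨u₀, hext, hMT, hsm⟩
    have hu₀mem : u₀ ∈ {x : l1 n | ‖x‖ = 1 ∧ ‖T x‖ = ‖T‖} := by
      rw [hMT]; exact Set.mem_insert _ _
    obtain ⟨hu₀norm, hu₀T⟩ := hu₀mem
    obtain ⟨i₀, hcase⟩ := extreme_classify u₀ hext hu₀norm
    have hmax : ‖T (ee i₀)‖ = ‖T‖ := by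
      rcases hcase with hc | hc
      · rw [← hc]; exact hu₀T
      · have : T u₀ = -(T (ee i₀)) := by rw [hc, map_neg]
        rw [this, norm_neg] at hu₀T
        exact hu₀T
    have huniq : ∀ j, j ≠ i₀ → ‖T (ee j)‖ < ‖T‖ := by
      intro j hj
      rcases lt_or_eq_of_le (norm_apply_ee_le T j) with h' | h'
      · exact h'
      exfalso
      have hmem : (ee j : l1 n) ∈ {x : l1 n | ‖x‖ = 1 ∧ ‖T x‖ = ‖T‖} := ⟨norm_ee j, h'⟩
      rw [hMT] at hmem
      have hmem' : (ee j : l1 n) = ee i₀ ∨ (ee j : l1 n) = -ee i₀ := by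
        rcases hcase with hc | hc <;> rcases hmem with hm | hm <;>
          simp only [hc, Set.mem_singleton_iff, neg_neg] at hm ⊢
        · exact Or.inl hm
        · exact Or.inr hm
        · exact Or.inr hm
        · exact Or.inl hm
      rcases hmem' with hm | hm
      · exact ee_ne_ee hj hm
      · exact ee_ne_neg_ee j i₀ hm
    have transf : ∀ A : l1 n →L[ℝ] Y, rhoP T A = rhoP (T (ee i₀)) (A (ee i₀)) := fun A =>
      rhoP_eq_of_norm_eventually hmax.symm (norm_eventually_eq T A hT i₀ hmax huniq)
    have hsm' : ∀ y₁ y₂ : Y,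
        rhoP (T (ee i₀)) (y₁ + y₂) = rhoP (T (ee i₀)) y₁ + rhoP (T (ee i₀)) y₂ := by
      rcases hcase with hc | hc
      · rwa [hc] at hsm
      · intro y₁ y₂
        have hneg : T u₀ = -(T (ee i₀)) := by rw [hc, map_neg]
        have key : ∀ z : Y, rhoP (T (ee i₀)) z = rhoP (T u₀) (-z) := by
          intro z
          rw [hneg, rhoP_neg, neg_neg]
        rw [key, key, key, neg_add]
        exact hsm (-y₁) (-y₂)
    intro A B
    rw [transf (A + B), transf A, transf B, ContinuousLinearMap.add_apply]
    exact hsm' _ _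
end

section
/- In the space ℓ∞² (ℝ² with the norm ‖(a,b)‖ = max{|a|,|b|}), let x = (1,1). Then the set x^{⊥₊} = {y ∈ ℓ∞² : ρ'₊(x,y) = 0} equals {(−α, 0) : α ≥ 0} ∪ {(0, −β) : β ≥ 0}. -/
open Filter Set

lemma norm_fin2 (v : Fin 2 → ℝ) : ‖v‖ = max |v 0| |v 1| := by
  rw [Pi.norm_def]
  norm_cast
  rw [show (Finset.univ : Finset (Fin 2)) = {0, 1} by decide]
  simp [Finset.sup_insert]

lemma rhoP_eq (y : Fin 2 → ℝ) : rhoP (![1, 1] : Fin 2 → ℝ) y = max (y 0) (y 1) := by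
  have hx : ‖(![1, 1] : Fin 2 → ℝ)‖ = 1 := by
    rw [norm_fin2]; norm_num
  apply Tendsto.limUnder_eq
  have hev : ∀ᶠ t in nhdsWithin (0 : ℝ) (Set.Ioi 0),
      ‖(![1,1] : Fin 2 → ℝ)‖ * (‖(![1,1] : Fin 2 → ℝ) + t • y‖ - ‖(![1,1] : Fin 2 → ℝ)‖) / t
        = max (y 0) (y 1) := by
    have hset : Set.Ioo (0:ℝ) (1 / (1 + |y 0| + |y 1|)) ∈ nhdsWithin (0 : ℝ) (Set.Ioi 0) := by
      apply Ioo_mem_nhdsGT_of_mem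
      constructor
      · exact le_refl 0
      · positivity
    filter_upwards [hset] with t ht
    obtain ⟨ht0, ht1⟩ := ht
    have hb : ∀ i : Fin 2, 0 < 1 + t * y i := by
      intro i
      have h1 : |t * y i| < 1 := by
        have hy : |y i| ≤ |y 0| + |y 1| := by fin_cases i <;> simp <;> positivity
        have : t * (1 + |y 0| + |y 1|) < 1 :=
          (lt_div_iff₀ (by positivity)).mp ht1
        calc |t * y i| = t * |y i| := by rw [abs_mul, abs_of_pos ht0]
          _ ≤ t * (1 + |y 0| + |y 1|) := by nlinarith [abs_nonneg (y i)]
          _ < 1 := this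
      nlinarith [neg_abs_le (t * y i)]
    have hnorm : ‖(![1,1] : Fin 2 → ℝ) + t • y‖ = 1 + t * max (y 0) (y 1) := by
      rw [norm_fin2]
      simp only [Pi.add_apply, Pi.smul_apply, smul_eq_mul, Matrix.cons_val_zero, Matrix.cons_val_one, Matrix.head_cons]
      rw [abs_of_pos (hb 0), abs_of_pos (hb 1)]
      rcases le_total (y 0) (y 1) with h | h
      · rw [max_eq_right h, max_eq_right]; nlinarith
      · rw [max_eq_left h, max_eq_left]; nlinarith
    rw [hx, hnorm]
    field_simp
    ring
  rw [tendsto_congr' hev]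
  exact tendsto_const_nhds

/-- In ℓ∞² (that is, Fin 2 → ℝ with the sup norm), for x = (1,1), the set
x^{⊥₊} = {y : ρ'₊(x,y) = 0} equals {(-α,0) : α ≥ 0} ∪ {(0,-β) : β ≥ 0}. -/
theorem rhoP_orthogonality_set_linfty2 :
    {y : Fin 2 → ℝ | rhoP (![1, 1] : Fin 2 → ℝ) y = 0} =
      {y : Fin 2 → ℝ | ∃ α : ℝ, 0 ≤ α ∧ y = ![-α, 0]} ∪
        {y : Fin 2 → ℝ | ∃ β : ℝ, 0 ≤ β ∧ y = ![0, -β]} := by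
  ext y
  simp only [Set.mem_setOf_eq, Set.mem_union, rhoP_eq]
  constructor
  · intro h
    rcases max_cases (y 0) (y 1) with ⟨h1, h2⟩ | ⟨h1, h2⟩
    · right
      refine ⟨-(y 1), by linarith [h1 ▸ h], ?_⟩
      ext i; fin_cases i <;> simp <;> linarith [h1 ▸ h]
    · left
      refine ⟨-(y 0), by linarith [h1 ▸ h], ?_⟩
      ext i; fin_cases i <;> simp <;> linarith [h1 ▸ h]
  · rintro (⟨α, hα, rfl⟩ | ⟨β, hβ, rfl⟩) <;> simp <;> linarith
end

section
/- In the space ℓ∞² (ℝ² with the norm ‖(a,b)‖ = max{|a|,|b|}), let x = (1,1). Then the set x^{⊥₋} = {y ∈ ℓ∞² : ρ'₋(x,y) = 0} equals {(α, 0) : α ≥ 0} ∪ {(0, β) : β ≥ 0}. -/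
open Filter Set

lemma rhoM_eq_min (y : Fin 2 → ℝ) : rhoM (![1, 1] : Fin 2 → ℝ) y = min (y 0) (y 1) := by
  have hx : ‖(![1, 1] : Fin 2 → ℝ)‖ = 1 := by
    rw [norm_fin2]; norm_num
  apply Filter.Tendsto.limUnder_eq
  have hev : (fun t : ℝ =>
      ‖(![1,1] : Fin 2 → ℝ)‖ * (‖(![1,1] : Fin 2 → ℝ) + t • y‖ - ‖(![1,1] : Fin 2 → ℝ)‖) / t)
        =ᶠ[nhdsWithin (0 : ℝ) (Set.Iio 0)] (fun _ => min (y 0) (y 1)) := by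
    have h0 : (0:ℝ) < 1 / (1 + ‖y‖) := by positivity
    have hδ : -(1 / (1 + ‖y‖)) < (0:ℝ) := by linarith
    filter_upwards [Ioo_mem_nhdsLT hδ] with t ht
    obtain ⟨ht1, ht2⟩ := ht
    have htne : t ≠ 0 := ne_of_lt ht2
    have habs : |t| < 1 / (1 + ‖y‖) := by
      rw [abs_of_neg ht2]; linarith
    rw [lt_div_iff₀ (by positivity)] at habs
    have hkey : ∀ i : Fin 2, |t * y i| < 1 := by
      intro i
      have h1 : |y i| ≤ ‖y‖ := by
        rw [norm_fin2]; fin_cases i <;> simp [le_max_left, le_max_right]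
      have h2 : |t| * |y i| ≤ |t| * ‖y‖ :=
        mul_le_mul_of_nonneg_left h1 (abs_nonneg t)
      have h3 : |t| * ‖y‖ < 1 := by nlinarith [abs_nonneg t, norm_nonneg y]
      calc |t * y i| = |t| * |y i| := abs_mul _ _
        _ ≤ |t| * ‖y‖ := h2
        _ < 1 := h3
    have hpos : ∀ i : Fin 2, 0 < 1 + t * y i := by
      intro i
      have := abs_lt.mp (hkey i)
      linarith [this.1]
    have hnorm : ‖(![1,1] : Fin 2 → ℝ) + t • y‖ = 1 + t * min (y 0) (y 1) := by
      rw [norm_fin2]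
      simp only [Pi.add_apply, Pi.smul_apply, smul_eq_mul]
      rw [Matrix.cons_val_zero, Matrix.cons_val_one, Matrix.cons_val_zero]
      rw [abs_of_pos (hpos 0), abs_of_pos (hpos 1)]
      rcases le_total (y 0) (y 1) with h | h
      · rw [min_eq_left h, max_eq_left]
        nlinarith
      · rw [min_eq_right h, max_eq_right]
        nlinarith
    rw [hx, hnorm, one_mul]
    field_simp
    ring
  exact Tendsto.congr' hev.symm tendsto_const_nhds

/-- In ℓ∞² (that is, Fin 2 → ℝ with the sup norm), for x = (1,1), the set
x^{⊥₋} = {y : ρ'₋(x,y) = 0} equals {(α,0) : α ≥ 0} ∪ {(0,β) : β ≥ 0}. -/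
theorem rhoM_orthogonality_set_linfty2 :
    {y : Fin 2 → ℝ | rhoM (![1, 1] : Fin 2 → ℝ) y = 0} =
      {y : Fin 2 → ℝ | ∃ α : ℝ, 0 ≤ α ∧ y = ![α, 0]} ∪
        {y : Fin 2 → ℝ | ∃ β : ℝ, 0 ≤ β ∧ y = ![0, β]} := by
  ext y
  simp only [Set.mem_setOf_eq, Set.mem_union, rhoM_eq_min]
  constructor
  · intro h
    rcases le_total (y 0) (y 1) with hle | hle
    · right
      rw [min_eq_left hle] at h
      refine ⟨y 1, by linarith, ?_⟩
      funext i; fin_cases i <;> simp [h]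
    · left
      rw [min_eq_right hle] at h
      refine ⟨y 0, by linarith, ?_⟩
      funext i; fin_cases i <;> simp [h]
  · rintro (⟨α, hα, rfl⟩ | ⟨β, hβ, rfl⟩)
    · simp [min_eq_right, hα]
    · simp [min_eq_left, hβ]
end
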